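/- arXiv:1009.3949 — 2 statements merged into one kernel-verified Lean document; each statement's English description precedes it below -/
import Mathlib

section
/- Let n, m ≥ 1 be natural numbers and let NC₂²(n^{⊗2m}) denote the set of noncrossing pairings π of [2mn] that respect the interval partition n^{⊗2m} = n⊗⋯⊗n (2m factors) and such that every connected component of the linking graph C_π contains exactly two of the 2m blocks. Then the cardinality of NC₂²(n^{⊗2m}) equals the Catalan number C_m = (1/(m+1))·binomial(2m,m). -/
open MeasureTheory
open scoped ENNReal

/-- Lebesgue measure on the half line `ℝ₊ = [0,∞)`. -/
noncomputable def mplus : Measure ℝ := volume.restrict (Set.Ici 0)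

/-- A pairing (perfect matching) of `{0,…,N-1}`, encoded as a fixed-point-free involution;
the blocks of the pairing are the sets `{i, pair i}`. -/
structure Pairing (N : ℕ) where
  pair : Fin N → Fin N
  involutive : ∀ i, pair (pair i) = i
  fixedFree : ∀ i, pair i ≠ i

/-- A pairing is noncrossing if there are no indices `i < j < pair i < pair j`. -/
def Pairing.IsNoncrossing {N : ℕ} (P : Pairing N) : Prop :=
  ¬ ∃ i j : Fin N, i < j ∧ j < P.pair i ∧ P.pair i < P.pair j

/-- The smaller element of the block of `j`. -/
def Pairing.leader {N : ℕ} (P : Pairing N) (j : Fin N) : {i : Fin N // i < P.pair i} :=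
  if h : j < P.pair j then ⟨j, h⟩
  else ⟨P.pair j, by
    have h1 := P.involutive j
    have h2 := P.fixedFree j
    rw [h1]
    exact lt_of_le_of_ne (not_lt.mp h) h2⟩

/-- The pairing integral `∫_π F`: the integral over `ℝ₊^{N/2}` obtained from `F` by
identifying the variables `t_i = t_j` for each block `{i,j}` of the pairing. -/
noncomputable def pairingIntegral {N : ℕ} (P : Pairing N) (F : (Fin N → ℝ) → ℂ) : ℂ :=
  ∫ x : ({i : Fin N // i < P.pair i} → ℝ), F (fun j => x (P.leader j))
    ∂(Measure.pi fun _ => mplus)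

/-- Start index (0-based) of the `i`-th block of the interval partition `n₁ ⊗ ⋯ ⊗ n_r`. -/
def blockStart {r : ℕ} (nn : Fin r → ℕ) (i : Fin r) : ℕ := ∑ k ∈ Finset.Iio i, nn k

/-- `j` (0-based) lies in the `i`-th block of the interval partition `n₁ ⊗ ⋯ ⊗ n_r`. -/
def inBlock {r : ℕ} (nn : Fin r → ℕ) (i : Fin r) (j : ℕ) : Prop :=
  blockStart nn i ≤ j ∧ j < blockStart nn i + nn i

/-- The pairing respects the interval partition `n₁ ⊗ ⋯ ⊗ n_r`: no block of the pairing
contains two elements of the same interval block. -/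
def Respects {N r : ℕ} (nn : Fin r → ℕ) (P : Pairing N) : Prop :=
  ∀ j : Fin N, ∀ i : Fin r, inBlock nn i (j : ℕ) → ¬ inBlock nn i ((P.pair j : ℕ))

/-- `π` links the blocks `B_a` and `B_b` of the interval partition: some block of `π` has one
element in each. -/
def Links {N r : ℕ} (nn : Fin r → ℕ) (P : Pairing N) (a b : Fin r) : Prop :=
  ∃ j : Fin N, inBlock nn a (j : ℕ) ∧ inBlock nn b ((P.pair j : ℕ))

/-- The graph `C_π` on the blocks of the interval partition, with an edge when `π` links. -/
def linkGraph {N r : ℕ} (nn : Fin r → ℕ) (P : Pairing N) : SimpleGraph (Fin r) where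
  Adj a b := a ≠ b ∧ (Links nn P a b ∨ Links nn P b a)
  symm := ⟨fun _ _ h => ⟨h.1.symm, h.2.symm⟩⟩
  loopless := ⟨fun _ h => h.1 rfl⟩


namespace NCP

/-- number of `true`s among positions `< t`. -/
def upc (w : ℕ → Bool) (t : ℕ) : ℕ := ((Finset.range t).filter (fun k => w k = true)).card
def dnc (w : ℕ → Bool) (t : ℕ) : ℕ := ((Finset.range t).filter (fun k => w k = false)).card
/-- height of lattice path after `t` steps. -/
def ht (w : ℕ → Bool) (t : ℕ) : ℤ := (upc w t : ℤ) - (dnc w t : ℤ)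

lemma upc_succ (w : ℕ → Bool) (t : ℕ) :
    upc w (t+1) = upc w t + (if w t then 1 else 0) := by
  unfold upc
  rw [Finset.range_add_one, Finset.filter_insert]
  cases h : w t <;> simp [h, Finset.card_insert_of_notMem]

lemma dnc_succ (w : ℕ → Bool) (t : ℕ) :
    dnc w (t+1) = dnc w t + (if w t then 0 else 1) := by
  unfold dnc
  rw [Finset.range_add_one, Finset.filter_insert]
  cases h : w t <;> simp [h, Finset.card_insert_of_notMem]

lemma ht_succ (w : ℕ → Bool) (t : ℕ) :
    ht w (t+1) = ht w t + (if w t then 1 else -1) := by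
  unfold ht
  rw [upc_succ, dnc_succ]
  cases h : w t <;> simp <;> ring

@[simp] lemma ht_zero (w : ℕ → Bool) : ht w 0 = 0 := by simp [ht, upc, dnc]

lemma ht_succ_true {w : ℕ → Bool} {t : ℕ} (h : w t = true) : ht w (t+1) = ht w t + 1 := by
  rw [ht_succ, h]; simp

lemma ht_succ_false {w : ℕ → Bool} {t : ℕ} (h : w t = false) : ht w (t+1) = ht w t - 1 := by
  rw [ht_succ, h]; simp; ring

/-- Discrete IVT, increasing direction. -/
lemma ivt_up (w : ℕ → Bool) {a b : ℕ} (hab : a ≤ b) {c : ℤ}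
    (h1 : ht w a ≤ c) (h2 : c ≤ ht w b) : ∃ k, a ≤ k ∧ k ≤ b ∧ ht w k = c := by
  induction b with
  | zero =>
    obtain rfl : a = 0 := Nat.le_zero.mp hab
    exact ⟨0, le_refl _, le_refl _, le_antisymm h1 h2⟩
  | succ b ih =>
    rcases Nat.lt_or_ge a (b+1) with h | h
    · have hab' : a ≤ b := Nat.lt_succ_iff.mp h
      by_cases hc : c ≤ ht w b
      · obtain ⟨k, h1', h2', h3'⟩ := ih hab' hc
        exact ⟨k, h1', Nat.le_succ_of_le h2', h3'⟩
      · push_neg at hc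
        have hs := ht_succ w b
        have : ht w (b+1) ≤ ht w b + 1 := by rw [hs]; split <;> omega
        exact ⟨b+1, Nat.le_of_lt h, le_refl _, by omega⟩
    · have : a = b + 1 := le_antisymm hab h
      subst this
      exact ⟨b+1, le_refl _, le_refl _, le_antisymm h1 h2⟩

/-- Discrete IVT, decreasing direction. -/
lemma ivt_down (w : ℕ → Bool) {a b : ℕ} (hab : a ≤ b) {c : ℤ}
    (h1 : c ≤ ht w a) (h2 : ht w b ≤ c) : ∃ k, a ≤ k ∧ k ≤ b ∧ ht w k = c := by
  induction b with
  | zero =>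
    obtain rfl : a = 0 := Nat.le_zero.mp hab
    exact ⟨0, le_refl _, le_refl _, le_antisymm h2 h1⟩
  | succ b ih =>
    rcases Nat.lt_or_ge a (b+1) with h | h
    · have hab' : a ≤ b := Nat.lt_succ_iff.mp h
      by_cases hc : ht w b ≤ c
      · obtain ⟨k, h1', h2', h3'⟩ := ih hab' hc
        exact ⟨k, h1', Nat.le_succ_of_le h2', h3'⟩
      · push_neg at hc
        have hs := ht_succ w b
        have : ht w b - 1 ≤ ht w (b+1) := by rw [hs]; split <;> omega
        exact ⟨b+1, Nat.le_of_lt h, le_refl _, by omega⟩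
    · have : a = b + 1 := le_antisymm hab h
      subst this
      exact ⟨b+1, le_refl _, le_refl _, le_antisymm h2 h1⟩

/-- Dyck property of a word `w` on `[0, N)`. -/
def IsDyck (w : ℕ → Bool) (N : ℕ) : Prop :=
  (∀ t, t ≤ N → 0 ≤ ht w t) ∧ ht w N = 0

/-- The matching partner of an opener. -/
noncomputable def mu (w : ℕ → Bool) (i : ℕ) : ℕ :=
  sInf {j | i < j ∧ ht w (j+1) = ht w i}

/-- The matching partner of a closer. -/
noncomputable def nu (w : ℕ → Bool) (j : ℕ) : ℕ :=
  sSup {i | i < j ∧ ht w i = ht w (j+1)}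

section Matching
variable {w : ℕ → Bool} {N : ℕ} (hw : IsDyck w N)

include hw in
lemma mu_spec {i : ℕ} (hi : i < N) (hwi : w i = true) :
    i < mu w i ∧ mu w i < N ∧ ht w (mu w i + 1) = ht w i := by
  have hstep : ht w (i+1) = ht w i + 1 := ht_succ_true hwi
  have h0 : ht w N ≤ ht w i := by
    rw [hw.2]; exact hw.1 i (le_of_lt hi)
  obtain ⟨k, hk1, hk2, hk3⟩ := ivt_down w (show i + 1 ≤ N from Nat.succ_le_of_lt hi)
    (show ht w i ≤ ht w (i+1) by omega) h0
  have hki : k ≠ i + 1 := by intro h; rw [h] at hk3; omega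
  have hk1' : i + 2 ≤ k := by omega
  have hmem : (k - 1) ∈ {j | i < j ∧ ht w (j+1) = ht w i} := by
    constructor
    · omega
    · have : k - 1 + 1 = k := by omega
      rw [this]; exact hk3
  have hne : Set.Nonempty {j | i < j ∧ ht w (j+1) = ht w i} := ⟨k-1, hmem⟩
  have hmu_mem := Nat.sInf_mem hne
  have hmu_le : mu w i ≤ k - 1 := Nat.sInf_le hmem
  exact ⟨hmu_mem.1, by omega, hmu_mem.2⟩

include hw in
lemma mu_min {i : ℕ} (hi : i < N) (hwi : w i = true) {k : ℕ} (h1 : i < k) (h2 : k ≤ mu w i) :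
    ht w i < ht w k := by
  by_contra hc
  push_neg at hc
  have hstep : ht w (i+1) = ht w i + 1 := ht_succ_true hwi
  obtain ⟨k', hk1, hk2, hk3⟩ := ivt_down w (show i + 1 ≤ k by omega) (by omega) hc
  have hki : k' ≠ i + 1 := by intro h; rw [h] at hk3; omega
  have hmem : (k' - 1) ∈ {j | i < j ∧ ht w (j+1) = ht w i} := by
    constructor
    · omega
    · have : k' - 1 + 1 = k' := by omega
      rw [this]; exact hk3
  have hle : mu w i ≤ k' - 1 := Nat.sInf_le hmem
  omega

include hw in
lemma mu_closer {i : ℕ} (hi : i < N) (hwi : w i = true) : w (mu w i) = false := by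
  obtain ⟨h1, h2, h3⟩ := mu_spec hw hi hwi
  have h4 : ht w i < ht w (mu w i) := mu_min hw hi hwi h1 (le_refl _)
  have := ht_succ w (mu w i)
  by_contra hc
  simp only [Bool.not_eq_false] at hc
  rw [hc] at this
  simp at this
  omega

include hw in
lemma nu_spec {j : ℕ} (hj : j < N) (hwj : w j = false) :
    nu w j < j ∧ ht w (nu w j) = ht w (j+1) := by
  have hstep : ht w (j+1) = ht w j - 1 := ht_succ_false hwj
  have h0 : ht w 0 ≤ ht w (j+1) := by
    rw [ht_zero]; exact hw.1 (j+1) (Nat.succ_le_of_lt hj)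
  obtain ⟨k, hk1, hk2, hk3⟩ := ivt_up w (Nat.zero_le j) h0 (by omega)
  have hkj : k ≠ j := by intro h; rw [h] at hk3; omega
  have hmem : k ∈ {i | i < j ∧ ht w i = ht w (j+1)} := ⟨by omega, hk3⟩
  have hne : Set.Nonempty {i | i < j ∧ ht w i = ht w (j+1)} := ⟨k, hmem⟩
  have hbdd : BddAbove {i | i < j ∧ ht w i = ht w (j+1)} := ⟨j, fun x hx => le_of_lt hx.1⟩
  have := Nat.sSup_mem hne hbdd
  exact ⟨this.1, this.2⟩

include hw in
lemma nu_max {j : ℕ} (hj : j < N) (hwj : w j = false) {k : ℕ} (h1 : nu w j < k) (h2 : k ≤ j) :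
    ht w (j+1) < ht w k := by
  by_contra hc
  push_neg at hc
  have hstep : ht w (j+1) = ht w j - 1 := ht_succ_false hwj
  obtain ⟨k', hk1, hk2, hk3⟩ := ivt_up w h2 hc (by omega)
  have hkj : k' ≠ j := by intro h; rw [h] at hk3; omega
  have hmem : k' ∈ {i | i < j ∧ ht w i = ht w (j+1)} := ⟨by omega, hk3⟩
  have hbdd : BddAbove {i | i < j ∧ ht w i = ht w (j+1)} := ⟨j, fun x hx => le_of_lt hx.1⟩
  have := le_csSup hbdd hmem
  -- k ≤ k' ≤ nu w j < k
  have : k' ≤ nu w j := this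
  omega

include hw in
lemma nu_opener {j : ℕ} (hj : j < N) (hwj : w j = false) : w (nu w j) = true := by
  obtain ⟨h1, h2⟩ := nu_spec hw hj hwj
  have h4 : ht w (j+1) < ht w (nu w j + 1) := nu_max hw hj hwj (Nat.lt_succ_self _) h1
  have := ht_succ w (nu w j)
  by_contra hc
  simp only [Bool.not_eq_true] at hc
  rw [hc] at this
  simp at this
  omega

include hw in
lemma nu_mu {i : ℕ} (hi : i < N) (hwi : w i = true) : nu w (mu w i) = i := by
  obtain ⟨h1, h2, h3⟩ := mu_spec hw hi hwi
  have hwc : w (mu w i) = false := mu_closer hw hi hwi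
  have hmem : i ∈ {i' | i' < mu w i ∧ ht w i' = ht w (mu w i + 1)} := ⟨h1, h3.symm⟩
  have hbdd : BddAbove {i' | i' < mu w i ∧ ht w i' = ht w (mu w i + 1)} :=
    ⟨mu w i, fun x hx => le_of_lt hx.1⟩
  have hle : i ≤ nu w (mu w i) := le_csSup hbdd hmem
  rcases Nat.eq_or_lt_of_le hle with h | h
  · exact h.symm
  · exfalso
    obtain ⟨hn1, hn2⟩ := nu_spec hw h2 hwc
    have := mu_min hw hi hwi h (le_of_lt hn1)
    rw [hn2, h3] at this
    omega

include hw in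
lemma mu_nu {j : ℕ} (hj : j < N) (hwj : w j = false) : mu w (nu w j) = j := by
  obtain ⟨h1, h2⟩ := nu_spec hw hj hwj
  have hwo : w (nu w j) = true := nu_opener hw hj hwj
  have hmem : j ∈ {j' | nu w j < j' ∧ ht w (j'+1) = ht w (nu w j)} := ⟨h1, by rw [h2]⟩
  have hle : mu w (nu w j) ≤ j := Nat.sInf_le hmem
  rcases Nat.eq_or_lt_of_le hle with h | h
  · exact h
  · exfalso
    have hnuN : nu w j < N := lt_trans h1 hj
    obtain ⟨hm1, hm2, hm3⟩ := mu_spec hw hnuN hwo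
    -- mu w (nu w j) < j, ht w (mu (nu j) + 1) = ht w (nu j) = ht w (j+1)
    rw [h2] at hm3
    -- position mu(nu j)+1 : nu j < mu(nu j)+1 ≤ j, ht = ht w (j+1): contradicts nu_max
    have := nu_max hw hj hwj (show nu w j < mu w (nu w j) + 1 by omega) (by omega)
    omega

/-- the partner function determined by a word. -/
noncomputable def pairFun (w : ℕ → Bool) (k : ℕ) : ℕ := if w k then mu w k else nu w k

lemma pairFun_eq_mu {k : ℕ} (hwk : w k = true) : pairFun w k = mu w k := by
  unfold pairFun; rw [if_pos hwk]

lemma pairFun_eq_nu {k : ℕ} (hwk : w k = false) : pairFun w k = nu w k := by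
  unfold pairFun; rw [if_neg (by simp [hwk])]

include hw in
lemma pairFun_lt {k : ℕ} (hk : k < N) : pairFun w k < N := by
  cases hwk : w k with
  | true => rw [pairFun_eq_mu hwk]; exact (mu_spec hw hk hwk).2.1
  | false => rw [pairFun_eq_nu hwk]; exact lt_trans (nu_spec hw hk hwk).1 hk

include hw in
lemma pairFun_gt {k : ℕ} (hk : k < N) (hwk : w k = true) : k < pairFun w k := by
  rw [pairFun_eq_mu hwk]; exact (mu_spec hw hk hwk).1

include hw in
lemma pairFun_lt_self {k : ℕ} (hk : k < N) (hwk : w k = false) : pairFun w k < k := by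
  rw [pairFun_eq_nu hwk]; exact (nu_spec hw hk hwk).1

include hw in
lemma pairFun_invol {k : ℕ} (hk : k < N) : pairFun w (pairFun w k) = k := by
  cases hwk : w k with
  | true =>
    rw [pairFun_eq_mu hwk, pairFun_eq_nu (mu_closer hw hk hwk)]
    exact nu_mu hw hk hwk
  | false =>
    rw [pairFun_eq_nu hwk, pairFun_eq_mu (nu_opener hw hk hwk)]
    exact mu_nu hw hk hwk

include hw in
lemma pairFun_noncross {i j : ℕ} (hi : i < N) (hj : j < N)
    (h1 : i < j) (h2 : j < pairFun w i) (h3 : pairFun w i < pairFun w j) : False := by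
  have hwi : w i = true := by
    cases hwi : w i with
    | true => rfl
    | false => have := pairFun_lt_self hw hi hwi; omega
  have hwj : w j = true := by
    cases hwj : w j with
    | true => rfl
    | false => have := pairFun_lt_self hw hj hwj; omega
  rw [pairFun_eq_mu hwi] at h2 h3
  rw [pairFun_eq_mu hwj] at h3
  have e1 : ht w (mu w i + 1) = ht w i := (mu_spec hw hi hwi).2.2
  have e2 : ht w i < ht w j := mu_min hw hi hwi h1 (le_of_lt h2)
  have e3 : ht w j < ht w (mu w i + 1) := mu_min hw hj hwj (by omega) (by omega)
  omega

end Matching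
end NCP

namespace NCP
section OfPairing
variable {N : ℕ} (P : Pairing N)

/-- the pairing as a function on `ℕ`. -/
def pi (k : ℕ) : ℕ := if h : k < N then (P.pair ⟨k, h⟩ : ℕ) else k

/-- the word of a pairing. -/
def wordOf (k : ℕ) : Bool := decide (k < pi P k)

lemma pi_lt {k : ℕ} (hk : k < N) : pi P k < N := by
  unfold pi; rw [dif_pos hk]; exact (P.pair ⟨k, hk⟩).isLt

lemma pi_invol {k : ℕ} (hk : k < N) : pi P (pi P k) = k := by
  unfold pi
  rw [dif_pos hk, dif_pos (P.pair ⟨k, hk⟩).isLt]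
  have := P.involutive ⟨k, hk⟩
  rw [show (⟨(P.pair ⟨k, hk⟩ : ℕ), (P.pair ⟨k, hk⟩).isLt⟩ : Fin N) = P.pair ⟨k, hk⟩ from rfl, this]

lemma pi_ne {k : ℕ} (hk : k < N) : pi P k ≠ k := by
  unfold pi; rw [dif_pos hk]
  intro h
  exact P.fixedFree ⟨k, hk⟩ (Fin.ext h)

lemma wordOf_false {k : ℕ} (hk : k < N) (h : wordOf P k = false) : pi P k < k := by
  unfold wordOf at h
  simp only [decide_eq_false_iff_not, not_lt] at h
  exact lt_of_le_of_ne h (pi_ne P hk)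

lemma wordOf_true {k : ℕ} (h : wordOf P k = true) : k < pi P k := by
  unfold wordOf at h
  simpa using h

lemma wordOf_eq_true_of_lt {k : ℕ} (h : k < pi P k) : wordOf P k = true := by
  unfold wordOf; simpa using h

lemma wordOf_pi {k : ℕ} (hk : k < N) : wordOf P (pi P k) = !(wordOf P k) := by
  cases h : wordOf P k with
  | true =>
    have := wordOf_true P h
    have h2 : ¬ (pi P (pi P k) > pi P k) := by rw [pi_invol P hk]; omega
    unfold wordOf
    simp only [Bool.not_true, decide_eq_false_iff_not]
    omega
  | false =>
    have := wordOf_false P hk h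
    have h2 : pi P (pi P k) > pi P k := by rw [pi_invol P hk]; omega
    unfold wordOf
    simp only [Bool.not_false, decide_eq_true_eq]
    omega

lemma pi_val {x : ℕ} (hx : x < N) : (P.pair ⟨x, hx⟩ : ℕ) = pi P x := by
  unfold pi; rw [dif_pos hx]

lemma noncross_nat (hP : P.IsNoncrossing) {x y : ℕ} (hx : x < N) (hy : y < N)
    (h1 : x < y) (h2 : y < pi P x) (h3 : pi P x < pi P y) : False := by
  apply hP
  refine ⟨⟨x, hx⟩, ⟨y, hy⟩, ?_, ?_, ?_⟩ <;> simp only [Fin.lt_def]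
  · exact h1
  · rw [pi_val P hx]; exact h2
  · rw [pi_val P hx, pi_val P hy]; exact h3

/-- interval closure for noncrossing pairings -/
lemma interval_closed (hP : P.IsNoncrossing) {i k : ℕ} (hiN : i < N)
    (hop : i < pi P i) (h1 : i < k) (h2 : k < pi P i) :
    i < pi P k ∧ pi P k < pi P i := by
  have hpiN : pi P i < N := pi_lt P hiN
  have hkN : k < N := lt_trans h2 hpiN
  have hne : pi P k ≠ k := pi_ne P hkN
  have hne2 : pi P k ≠ i := by
    intro h
    have := pi_invol P hkN
    rw [h] at this
    omega
  have hne3 : pi P k ≠ pi P i := by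
    intro h
    have h4 := pi_invol P hkN
    have h5 := pi_invol P hiN
    rw [h] at h4
    omega
  rcases lt_trichotomy (pi P k) i with h | h | h
  · exfalso
    refine noncross_nat P hP (pi_lt P hkN) hiN h ?_ ?_
    · rw [pi_invol P hkN]; exact h1
    · rw [pi_invol P hkN]; exact h2
  · exact absurd h hne2
  · rcases lt_trichotomy (pi P k) (pi P i) with h' | h' | h'
    · exact ⟨h, h'⟩
    · exact absurd h' hne3
    · exact absurd (noncross_nat P hP hiN hkN h1 h2 h') id

/-- running count difference over an interval. -/
lemma ht_sub (w : ℕ → Bool) {t1 t2 : ℕ} (h : t1 ≤ t2) :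
    ht w t2 - ht w t1 =
      (((Finset.Ico t1 t2).filter (fun k => w k = true)).card : ℤ) -
      (((Finset.Ico t1 t2).filter (fun k => w k = false)).card : ℤ) := by
  have hsplit : Finset.range t2 = Finset.range t1 ∪ Finset.Ico t1 t2 := by
    simp only [Finset.range_eq_Ico]
    rw [Finset.Ico_union_Ico_eq_Ico (Nat.zero_le _) h]
  have hdisj : Disjoint (Finset.range t1) (Finset.Ico t1 t2) := by
    rw [Finset.range_eq_Ico]; exact Finset.Ico_disjoint_Ico_consecutive 0 t1 t2
  have hu : upc w t2 = upc w t1 + ((Finset.Ico t1 t2).filter (fun k => w k = true)).card := by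
    unfold upc
    rw [hsplit, Finset.filter_union, Finset.card_union_of_disjoint
      (Finset.disjoint_filter_filter hdisj)]
  have hd : dnc w t2 = dnc w t1 + ((Finset.Ico t1 t2).filter (fun k => w k = false)).card := by
    unfold dnc
    rw [hsplit, Finset.filter_union, Finset.card_union_of_disjoint
      (Finset.disjoint_filter_filter hdisj)]
  unfold ht
  rw [hu, hd]
  push_cast
  ring

lemma card_true_eq_false_of_closed {S : Finset ℕ} (hS1 : ∀ x ∈ S, x < N)
    (hS2 : ∀ x ∈ S, pi P x ∈ S) :
    (S.filter (fun k => wordOf P k = true)).card =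
      (S.filter (fun k => wordOf P k = false)).card := by
  apply Finset.card_bij (fun x _ => pi P x)
  · intro a ha
    rw [Finset.mem_filter] at ha ⊢
    refine ⟨hS2 a ha.1, ?_⟩
    rw [wordOf_pi P (hS1 a ha.1), ha.2]
    rfl
  · intro a1 ha1 a2 ha2 h
    rw [Finset.mem_filter] at ha1 ha2
    have e1 := pi_invol P (hS1 a1 ha1.1)
    have e2 := pi_invol P (hS1 a2 ha2.1)
    rw [← e1, ← e2, h]
  · intro b hb
    rw [Finset.mem_filter] at hb
    refine ⟨pi P b, Finset.mem_filter.mpr ⟨hS2 b hb.1, ?_⟩, pi_invol P (hS1 b hb.1)⟩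
    rw [wordOf_pi P (hS1 b hb.1), hb.2]
    rfl

lemma isDyck_wordOf : IsDyck (wordOf P) N := by
  constructor
  · intro t htN
    have hle : ((Finset.range t).filter (fun k => wordOf P k = false)).card ≤
        ((Finset.range t).filter (fun k => wordOf P k = true)).card := by
      apply Finset.card_le_card_of_injOn (pi P)
      · intro x hx
        rw [Finset.mem_coe, Finset.mem_filter, Finset.mem_range] at hx ⊢
        have hxN : x < N := lt_of_lt_of_le hx.1 htN
        have := wordOf_false P hxN hx.2
        refine ⟨by omega, ?_⟩
        rw [wordOf_pi P hxN, hx.2]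
        rfl
      · intro x hx y hy h
        rw [Finset.coe_filter] at hx hy
        simp only [Set.mem_setOf_eq, Finset.mem_range] at hx hy
        have e1 := pi_invol P (lt_of_lt_of_le hx.1 htN)
        have e2 := pi_invol P (lt_of_lt_of_le hy.1 htN)
        rw [← e1, ← e2, h]
    unfold ht upc dnc
    omega
  · have := card_true_eq_false_of_closed P (S := Finset.range N)
      (by intro x hx; exact Finset.mem_range.mp hx)
      (by intro x hx; exact Finset.mem_range.mpr (pi_lt P (Finset.mem_range.mp hx)))
    unfold ht upc dnc
    rw [this]
    omega

lemma wordOf_opener {i : ℕ} (hop : i < pi P i) : wordOf P i = true :=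
  wordOf_eq_true_of_lt P hop

lemma ht_pair_succ (hP : P.IsNoncrossing) {i : ℕ} (hiN : i < N) (hop : i < pi P i) :
    ht (wordOf P) (pi P i + 1) = ht (wordOf P) i := by
  have h := ht_sub (wordOf P) (show i ≤ pi P i + 1 by omega)
  rw [Finset.Ico_add_one_right_eq_Icc] at h
  have hcl := card_true_eq_false_of_closed P (S := Finset.Icc i (pi P i))
    (by intro x hx
        rw [Finset.mem_Icc] at hx
        exact lt_of_le_of_lt hx.2 (pi_lt P hiN))
    (by intro x hx
        rw [Finset.mem_Icc] at hx ⊢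
        rcases eq_or_lt_of_le hx.1 with h1 | h1
        · rw [← h1]; constructor
          · omega
          · exact le_refl _
        · rcases eq_or_lt_of_le hx.2 with h2 | h2
          · rw [h2, pi_invol P hiN]; omega
          · have := interval_closed P hP hiN hop h1 h2
            omega)
  rw [hcl] at h
  omega

lemma ht_ne_of_lt_pair (hP : P.IsNoncrossing) {i j' : ℕ} (hiN : i < N)
    (hop : i < pi P i) (h1 : i < j') (h2 : j' < pi P i) :
    ht (wordOf P) (j' + 1) ≠ ht (wordOf P) i := by
  intro heq
  have hpiN : pi P i < N := pi_lt P hiN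
  have h := ht_sub (wordOf P) (show i ≤ j' + 1 by omega)
  rw [Finset.Ico_add_one_right_eq_Icc, heq] at h
  have hcards : ((Finset.Icc i j').filter (fun k => wordOf P k = true)).card =
      ((Finset.Icc i j').filter (fun k => wordOf P k = false)).card := by omega
  have hwi : wordOf P i = true := wordOf_opener P hop
  have himem : i ∈ (Finset.Icc i j').filter (fun k => wordOf P k = true) := by
    rw [Finset.mem_filter, Finset.mem_Icc]
    exact ⟨⟨le_refl _, le_of_lt h1⟩, hwi⟩
  have hle : ((Finset.Icc i j').filter (fun k => wordOf P k = false)).card ≤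
      (((Finset.Icc i j').filter (fun k => wordOf P k = true)).erase i).card := by
    apply Finset.card_le_card_of_injOn (pi P)
    · intro x hx
      rw [Finset.mem_coe, Finset.mem_filter, Finset.mem_Icc] at hx
      have hxi : x ≠ i := by
        intro h'
        rw [h'] at hx
        rw [hx.2] at hwi
        exact absurd hwi (by simp)
      have hx1 : i < x := lt_of_le_of_ne hx.1.1 (Ne.symm hxi)
      have hx2 : x < pi P i := lt_of_le_of_lt hx.1.2 h2
      have hxN : x < N := lt_trans hx2 hpiN
      have hint := interval_closed P hP hiN hop hx1 hx2
      have hlt := wordOf_false P hxN hx.2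
      rw [Finset.mem_coe, Finset.mem_erase, Finset.mem_filter, Finset.mem_Icc]
      refine ⟨by omega, ⟨by omega, ?_⟩⟩
      rw [wordOf_pi P hxN, hx.2]
      rfl
    · intro x hx y hy h'
      rw [Finset.coe_filter] at hx hy
      simp only [Set.mem_setOf_eq, Finset.mem_Icc] at hx hy
      have e1 := pi_invol P (show x < N by omega)
      have e2 := pi_invol P (show y < N by omega)
      rw [← e1, ← e2, h']
  rw [Finset.card_erase_of_mem himem] at hle
  have hpos : 0 < ((Finset.Icc i j').filter (fun k => wordOf P k = true)).card :=
    Finset.card_pos.mpr ⟨i, himem⟩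
  omega

lemma mu_wordOf (hP : P.IsNoncrossing) {i : ℕ} (hiN : i < N) (hop : i < pi P i) :
    mu (wordOf P) i = pi P i := by
  have hmem : pi P i ∈ {j | i < j ∧ ht (wordOf P) (j+1) = ht (wordOf P) i} :=
    ⟨hop, ht_pair_succ P hP hiN hop⟩
  have hle : mu (wordOf P) i ≤ pi P i := Nat.sInf_le hmem
  have hne : Set.Nonempty {j | i < j ∧ ht (wordOf P) (j+1) = ht (wordOf P) i} := ⟨_, hmem⟩
  have hmm : mu (wordOf P) i ∈ {j | i < j ∧ ht (wordOf P) (j+1) = ht (wordOf P) i} :=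
    Nat.sInf_mem hne
  rcases eq_or_lt_of_le hle with h | h
  · exact h
  · exact absurd hmm.2 (ht_ne_of_lt_pair P hP hiN hop hmm.1 h)

lemma pairFun_wordOf (hP : P.IsNoncrossing) {k : ℕ} (hk : k < N) :
    pairFun (wordOf P) k = pi P k := by
  have hD := isDyck_wordOf P
  cases hw : wordOf P k with
  | true =>
    rw [pairFun_eq_mu hw]
    exact mu_wordOf P hP hk (wordOf_true P hw)
  | false =>
    have hlt := wordOf_false P hk hw
    have hiN : pi P k < N := pi_lt P hk
    have hop : pi P k < pi P (pi P k) := by rw [pi_invol P hk]; exact hlt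
    have hmu : mu (wordOf P) (pi P k) = k := by
      rw [mu_wordOf P hP hiN hop, pi_invol P hk]
    rw [pairFun_eq_nu hw]
    have h := nu_mu hD hiN (wordOf_opener P hop)
    rw [hmu] at h
    exact h

end OfPairing

section EquivWord
variable {N : ℕ}

/-- extension of a `Fin`-indexed word to `ℕ`. -/
def extW (w : Fin N → Bool) : ℕ → Bool := fun k => if h : k < N then w ⟨k, h⟩ else false

lemma pairing_ext {P Q : Pairing N} (h : ∀ k, P.pair k = Q.pair k) : P = Q := by
  cases P; cases Q
  congr 1
  funext k
  exact h k

/-- the word of a pairing, as a `Fin`-indexed word. -/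
def toWordFin (P : Pairing N) : Fin N → Bool := fun k => wordOf P (k : ℕ)

lemma extW_toWordFin (P : Pairing N) : extW (toWordFin P) = wordOf P := by
  funext k
  unfold extW toWordFin
  by_cases h : k < N
  · rw [dif_pos h]
  · rw [dif_neg h]
    unfold wordOf pi
    rw [dif_neg h]
    simp

/-- the pairing determined by a Dyck word. -/
noncomputable def ofWord (w : Fin N → Bool) (hw : IsDyck (extW w) N) : Pairing N where
  pair k := ⟨pairFun (extW w) k, pairFun_lt hw k.isLt⟩
  involutive k := Fin.ext (pairFun_invol hw k.isLt)
  fixedFree k := by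
    intro h
    have h' : pairFun (extW w) k = (k : ℕ) := congrArg Fin.val h
    cases hwk : extW w (k : ℕ) with
    | true => have := pairFun_gt hw k.isLt hwk; omega
    | false => have := pairFun_lt_self hw k.isLt hwk; omega

lemma ofWord_noncrossing (w : Fin N → Bool) (hw : IsDyck (extW w) N) :
    (ofWord w hw).IsNoncrossing := by
  rintro ⟨i, j, h1, h2, h3⟩
  exact pairFun_noncross hw i.isLt j.isLt h1 h2 h3

/-- noncrossing pairings of `Fin N` are equivalent to Dyck words of length `N`. -/
noncomputable def ncpEquivWord (N : ℕ) :
    {P : Pairing N // P.IsNoncrossing} ≃ {w : Fin N → Bool // IsDyck (extW w) N} where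
  toFun P := ⟨toWordFin P.1, by rw [extW_toWordFin]; exact isDyck_wordOf P.1⟩
  invFun w := ⟨ofWord w.1 w.2, ofWord_noncrossing w.1 w.2⟩
  left_inv P := by
    apply Subtype.ext
    apply pairing_ext
    intro k
    apply Fin.ext
    show pairFun (extW (toWordFin P.1)) k = _
    rw [extW_toWordFin, pairFun_wordOf P.1 P.2 k.isLt, ← pi_val P.1 k.isLt]
  right_inv w := by
    apply Subtype.ext
    funext k
    show wordOf (ofWord w.1 w.2) (k : ℕ) = w.1 k
    have hpi : pi (ofWord w.1 w.2) (k : ℕ) = pairFun (extW w.1) k := by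
      unfold pi
      rw [dif_pos k.isLt]
      rfl
    have hek : extW w.1 (k : ℕ) = w.1 k := by
      unfold extW
      rw [dif_pos k.isLt]
    unfold wordOf
    rw [hpi]
    cases hwk : w.1 k with
    | true =>
      have := pairFun_gt w.2 k.isLt (hek.trans hwk)
      simpa using this
    | false =>
      have := pairFun_lt_self w.2 k.isLt (hek.trans hwk)
      simp only [decide_eq_false_iff_not, not_lt]
      omega

end EquivWord

section DyckList
open DyckStep
variable {N : ℕ}

/-- the word as a list of Dyck steps. -/
def toStepList (w : Fin N → Bool) : List DyckStep :=
  List.ofFn (fun k => if w k then U else D)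

lemma toStepList_length (w : Fin N → Bool) : (toStepList w).length = N := by
  simp [toStepList]

lemma count_take_U (w : Fin N → Bool) {t : ℕ} (ht : t ≤ N) :
    ((toStepList w).take t).count U = upc (extW w) t := by
  induction t with
  | zero => simp [upc]
  | succ t ih =>
    have htN : t < N := ht
    rw [List.take_succ, List.count_append, ih (le_of_lt htN), upc_succ]
    have hg : (toStepList w)[t]? = some (if w ⟨t, htN⟩ then U else D) := by
      rw [List.getElem?_eq_getElem (by rw [toStepList_length]; exact htN)]
      congr 1
      unfold toStepList
      rw [List.getElem_ofFn]
    rw [hg]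
    have he : extW w t = w ⟨t, htN⟩ := by unfold extW; rw [dif_pos htN]
    rw [he]
    cases hwt : w ⟨t, htN⟩ <;> simp

lemma count_take_D (w : Fin N → Bool) {t : ℕ} (ht : t ≤ N) :
    ((toStepList w).take t).count D = dnc (extW w) t := by
  induction t with
  | zero => simp [dnc]
  | succ t ih =>
    have htN : t < N := ht
    rw [List.take_succ, List.count_append, ih (le_of_lt htN), dnc_succ]
    have hg : (toStepList w)[t]? = some (if w ⟨t, htN⟩ then U else D) := by
      rw [List.getElem?_eq_getElem (by rw [toStepList_length]; exact htN)]
      congr 1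
      unfold toStepList
      rw [List.getElem_ofFn]
    rw [hg]
    have he : extW w t = w ⟨t, htN⟩ := by unfold extW; rw [dif_pos htN]
    rw [he]
    cases hwt : w ⟨t, htN⟩ <;> simp

lemma count_full_U (w : Fin N → Bool) : (toStepList w).count U = upc (extW w) N := by
  rw [← count_take_U w (le_refl N)]
  rw [List.take_of_length_le (by rw [toStepList_length])]

lemma count_full_D (w : Fin N → Bool) : (toStepList w).count D = dnc (extW w) N := by
  rw [← count_take_D w (le_refl N)]
  rw [List.take_of_length_le (by rw [toStepList_length])]

lemma upc_add_dnc (w : ℕ → Bool) (t : ℕ) : upc w t + dnc w t = t := by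
  unfold upc dnc
  have h := Finset.card_filter_add_card_filter_not
    (s := Finset.range t) (p := fun k => w k = true)
  simp only [Bool.not_eq_true] at h
  rw [Finset.card_range] at h
  exact h

/-- Dyck words of length `2*m` as Boolean functions are equivalent to `DyckWord`s of
semilength `m`. -/
noncomputable def wordEquivDyckWord (m : ℕ) :
    {w : Fin (2*m) → Bool // IsDyck (extW w) (2*m)} ≃ {p : DyckWord // p.semilength = m} where
  toFun w := by
    refine ⟨⟨toStepList w.1, ?_, ?_⟩, ?_⟩
    · rw [count_full_U, count_full_D]
      have := w.2.2
      unfold ht at this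
      omega
    · intro i
      rcases le_or_gt i (2*m) with h | h
      · rw [count_take_U w.1 h, count_take_D w.1 h]
        have := w.2.1 i h
        unfold ht at this
        omega
      · rw [List.take_of_length_le (by rw [toStepList_length]; omega),
          count_full_U w.1, count_full_D w.1]
        have := w.2.2
        unfold ht at this
        omega
    · show (toStepList w.1).count U = m
      rw [count_full_U]
      have h1 := w.2.2
      unfold ht at h1
      have h2 := upc_add_dnc (extW w.1) (2*m)
      omega
  invFun p := by
    have hlen : p.1.toList.length = 2 * m := by
      rw [← DyckWord.two_mul_semilength_eq_length, p.2]
    refine ⟨fun k => decide (p.1.toList[(k : ℕ)]'(by rw [hlen]; exact k.isLt) = U), ?_⟩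
    have hlist : toStepList (fun k : Fin (2*m) =>
        decide (p.1.toList[(k : ℕ)]'(by rw [hlen]; exact k.isLt) = U)) = p.1.toList := by
      apply List.ext_getElem
      · rw [toStepList_length, hlen]
      · intro i h1 h2
        unfold toStepList
        simp only [List.getElem_ofFn]
        rcases (p.1.toList[i]'h2).dichotomy with h | h <;> simp [h]
    constructor
    · intro t htle
      rw [ht, ← count_take_U _ htle, ← count_take_D _ htle, hlist]
      have := p.1.count_D_le_count_U t
      omega
    · rw [ht, ← count_full_U, ← count_full_D, hlist]
      have := p.1.count_U_eq_count_D
      omega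
  left_inv w := by
    apply Subtype.ext
    funext k
    show decide ((toStepList w.1)[(k:ℕ)]'_ = U) = w.1 k
    unfold toStepList
    rw [List.getElem_ofFn]
    cases hwk : w.1 k with
    | true => simp [Fin.eta, hwk]
    | false => simp [Fin.eta, hwk]
  right_inv p := by
    apply Subtype.ext
    apply DyckWord.ext
    show toStepList _ = p.1.toList
    apply List.ext_getElem
    · rw [toStepList_length, ← DyckWord.two_mul_semilength_eq_length, p.2]
    · intro i h1 h2
      unfold toStepList
      simp only [List.getElem_ofFn]
      rcases (p.1.toList[i]'h2).dichotomy with h | h <;> simp [h]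

/-- The number of noncrossing pairings of `[2m]` is the Catalan number. -/
theorem card_ncp (m : ℕ) :
    Nat.card {P : Pairing (2*m) // P.IsNoncrossing} = catalan m := by
  rw [Nat.card_congr (ncpEquivWord (2*m)), Nat.card_congr (wordEquivDyckWord m),
    Nat.card_eq_fintype_card, DyckWord.card_dyckWord_semilength_eq_catalan]

end DyckList

section Blocks
variable {m n : ℕ}

lemma blockStart_eq (i : Fin (2*m)) : blockStart (fun _ : Fin (2*m) => n) i = i * n := by
  unfold blockStart
  rw [Finset.sum_const, Fin.card_Iio, smul_eq_mul]

lemma inBlock_iff' {i : Fin (2*m)} {x : ℕ} :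
    inBlock (fun _ : Fin (2*m) => n) i x ↔ ((i : ℕ) * n ≤ x ∧ x < (i : ℕ) * n + n) := by
  unfold inBlock
  rw [blockStart_eq]

lemma inBlock_iff (hn : 1 ≤ n) {i : Fin (2*m)} {x : ℕ} :
    inBlock (fun _ : Fin (2*m) => n) i x ↔ x / n = (i : ℕ) := by
  rw [inBlock_iff']
  constructor
  · rintro ⟨h1, h2⟩
    refine Nat.div_eq_of_lt_le h1 ?_
    have : ((i : ℕ) + 1) * n = (i : ℕ) * n + n := by ring
    omega
  · intro h
    rw [← h]
    have h1 : x / n * n ≤ x := Nat.div_mul_le_self x n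
    have h2 := Nat.div_add_mod x n
    have h3 : x % n < n := Nat.mod_lt x hn
    have h4 : n * (x / n) = x / n * n := by ring
    exact ⟨h1, by omega⟩

lemma blk_lt (hn : 1 ≤ n) {x : ℕ} (hx : x < 2*m*n) : x / n < 2*m := by
  rw [Nat.mul_comm (2*m) n] at hx
  exact Nat.div_lt_of_lt_mul hx

/-- the block of an element. -/
def blk (hn : 1 ≤ n) (x : Fin (2*m*n)) : Fin (2*m) := ⟨(x : ℕ) / n, blk_lt hn x.isLt⟩

lemma inBlock_blk (hn : 1 ≤ n) (x : Fin (2*m*n)) :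
    inBlock (fun _ : Fin (2*m) => n) (blk hn x) (x : ℕ) := (inBlock_iff hn).mpr rfl

lemma blk_eq_of_inBlock (hn : 1 ≤ n) {i : Fin (2*m)} {x : Fin (2*m*n)}
    (h : inBlock (fun _ : Fin (2*m) => n) i (x : ℕ)) : blk hn x = i :=
  Fin.ext ((inBlock_iff hn).mp h)

lemma bval_lt (hn : 1 ≤ n) (b : Fin (2*m)) {c : ℕ} (hc : c < n) : (b : ℕ) * n + c < 2*m*n := by
  have h1 : ((b : ℕ) + 1) * n = (b : ℕ) * n + n := by ring
  have h2 : ((b : ℕ) + 1) * n ≤ 2*m*n := Nat.mul_le_mul_right n b.isLt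
  omega

lemma div_mk (hn : 1 ≤ n) (b c : ℕ) (hc : c < n) : (b * n + c) / n = b := by
  rw [Nat.mul_comm b n, Nat.mul_add_div (by omega), Nat.div_eq_of_lt hc]
  omega

lemma mod_mk (hn : 1 ≤ n) (b c : ℕ) (hc : c < n) : (b * n + c) % n = c := by
  rw [Nat.mul_comm b n, Nat.mul_add_mod]
  exact Nat.mod_eq_of_lt hc

lemma blk_mul_add_mod (hn : 1 ≤ n) (x : Fin (2*m*n)) :
    ((blk hn x : ℕ)) * n + (x : ℕ) % n = (x : ℕ) := by
  show (x : ℕ) / n * n + (x : ℕ) % n = (x : ℕ)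
  rw [Nat.mul_comm]
  exact Nat.div_add_mod _ _

lemma lt_of_blk_lt (hn : 1 ≤ n) {x y : Fin (2*m*n)} (h : blk hn x < blk hn y) :
    x < y := by
  have h' : (x : ℕ) / n < (y : ℕ) / n := h
  have h0 : ((x : ℕ)/n + 1) * n = (x : ℕ)/n * n + n := by ring
  have h1 : n * ((x : ℕ) / n) = (x : ℕ)/n * n := by ring
  have hm := Nat.div_add_mod (x : ℕ) n
  have h3 : (x : ℕ) % n < n := Nat.mod_lt _ hn
  have h2 : ((x : ℕ)/n + 1) * n ≤ (y : ℕ)/n * n := Nat.mul_le_mul_right n h'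
  have h4 : (y : ℕ)/n * n ≤ (y : ℕ) := Nat.div_mul_le_self _ _
  show (x : ℕ) < (y : ℕ)
  omega

lemma blk_le_of_le (hn : 1 ≤ n) {x y : Fin (2*m*n)} (h : x ≤ y) :
    blk hn x ≤ blk hn y := Nat.div_le_div_right h

/-- The rainbow pairing associated to a pairing of the blocks. -/
def rainbow (hn : 1 ≤ n) (Q : Pairing (2*m)) : Pairing (2*m*n) where
  pair x := ⟨(Q.pair (blk hn x) : ℕ) * n + (n - 1 - (x : ℕ) % n),
    bval_lt hn _ (by have := Nat.mod_lt (x : ℕ) hn; omega)⟩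
  involutive x := by
    apply Fin.ext
    have hmod : (x : ℕ) % n < n := Nat.mod_lt _ hn
    show (Q.pair (blk hn ⟨_, _⟩) : ℕ) * n + (n - 1 - (((Q.pair (blk hn x) : ℕ) * n + (n - 1 - (x : ℕ) % n)) % n)) = (x : ℕ)
    have hblk : blk hn (⟨(Q.pair (blk hn x) : ℕ) * n + (n - 1 - (x : ℕ) % n),
        bval_lt hn _ (by omega)⟩ : Fin (2*m*n)) = Q.pair (blk hn x) :=
      Fin.ext (div_mk hn _ _ (by omega))
    rw [hblk, mod_mk hn _ _ (by omega), Q.involutive]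
    have h5 := blk_mul_add_mod hn x
    omega
  fixedFree x := by
    intro h
    have h' := congrArg Fin.val h
    have hmod : (x : ℕ) % n < n := Nat.mod_lt _ hn
    have hdiv : ((Q.pair (blk hn x) : ℕ) * n + (n - 1 - (x : ℕ) % n)) / n
        = (Q.pair (blk hn x) : ℕ) := div_mk hn _ _ (by omega)
    have hx : (x : ℕ) / n = (Q.pair (blk hn x) : ℕ) := by
      rw [← h']
      exact hdiv
    exact Q.fixedFree (blk hn x) (Fin.ext hx.symm)

variable {Q : Pairing (2*m)}

lemma rainbow_pair_val (hn : 1 ≤ n) (Q : Pairing (2*m)) (x : Fin (2*m*n)) :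
    ((rainbow hn Q).pair x : ℕ) = (Q.pair (blk hn x) : ℕ) * n + (n - 1 - (x : ℕ) % n) := rfl

lemma blk_rainbow (hn : 1 ≤ n) (Q : Pairing (2*m)) (x : Fin (2*m*n)) :
    blk hn ((rainbow hn Q).pair x) = Q.pair (blk hn x) := by
  apply Fin.ext
  show (((rainbow hn Q).pair x : ℕ)) / n = _
  rw [rainbow_pair_val]
  exact div_mk hn _ _ (by have := Nat.mod_lt (x : ℕ) hn; omega)

lemma rainbow_respects (hn : 1 ≤ n) (Q : Pairing (2*m)) :
    Respects (fun _ : Fin (2*m) => n) (rainbow hn Q) := by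
  intro j i h1 h2
  have e1 : blk hn j = i := blk_eq_of_inBlock hn h1
  have e2 : blk hn ((rainbow hn Q).pair j) = i := blk_eq_of_inBlock hn h2
  rw [blk_rainbow, e1] at e2
  exact Q.fixedFree i e2

/-- first element of a block. -/
def firstEl (hn : 1 ≤ n) (a : Fin (2*m)) : Fin (2*m*n) := ⟨(a : ℕ) * n + 0, bval_lt hn a hn⟩

lemma blk_firstEl (hn : 1 ≤ n) (a : Fin (2*m)) : blk hn (firstEl hn a) = a :=
  Fin.ext (div_mk hn _ _ hn)

lemma inBlock_firstEl (hn : 1 ≤ n) (a : Fin (2*m)) :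
    inBlock (fun _ : Fin (2*m) => n) a ((firstEl hn a : ℕ)) := by
  have := inBlock_blk hn (firstEl hn a)
  rwa [blk_firstEl] at this

lemma links_rainbow (hn : 1 ≤ n) {a b : Fin (2*m)} :
    Links (fun _ : Fin (2*m) => n) (rainbow hn Q) a b ↔ b = Q.pair a := by
  constructor
  · rintro ⟨j, h1, h2⟩
    have e1 : blk hn j = a := blk_eq_of_inBlock hn h1
    have e2 : blk hn ((rainbow hn Q).pair j) = b := blk_eq_of_inBlock hn h2
    rw [blk_rainbow, e1] at e2
    exact e2.symm
  · rintro rfl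
    refine ⟨firstEl hn a, inBlock_firstEl hn a, ?_⟩
    have := inBlock_blk hn ((rainbow hn Q).pair (firstEl hn a))
    rwa [blk_rainbow, blk_firstEl] at this

lemma adj_rainbow (hn : 1 ≤ n) {a b : Fin (2*m)} :
    (linkGraph (fun _ : Fin (2*m) => n) (rainbow hn Q)).Adj a b ↔ b = Q.pair a := by
  show (a ≠ b ∧ _) ↔ _
  constructor
  · rintro ⟨hne, h | h⟩
    · exact (links_rainbow hn).mp h
    · have := (links_rainbow hn).mp h
      rw [this, Q.involutive]
  · rintro rfl
    refine ⟨?_, Or.inl ((links_rainbow hn).mpr rfl)⟩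
    intro he
    exact Q.fixedFree a (by rw [← he])

lemma reach_rainbow (hn : 1 ≤ n) {a b : Fin (2*m)} :
    (linkGraph (fun _ : Fin (2*m) => n) (rainbow hn Q)).Reachable a b ↔
      b = a ∨ b = Q.pair a := by
  constructor
  · intro h
    obtain ⟨p⟩ := h
    induction p with
    | nil => exact Or.inl rfl
    | cons h' p' ih =>
      rename_i u v w'
      have hv := (adj_rainbow hn).mp h'
      rcases ih with h1 | h1
      · exact Or.inr (by rw [h1, hv])
      · left
        rw [h1, hv, Q.involutive]
  · rintro (rfl | rfl)
    · exact SimpleGraph.Reachable.refl _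
    · exact ((adj_rainbow hn).mpr rfl).reachable

lemma comp_card_rainbow (hn : 1 ≤ n) (a : Fin (2*m)) :
    Nat.card {b : Fin (2*m) //
      (linkGraph (fun _ : Fin (2*m) => n) (rainbow hn Q)).Reachable a b} = 2 := by
  rw [Nat.card_eq_two_iff]
  refine ⟨⟨a, SimpleGraph.Reachable.refl _⟩,
    ⟨Q.pair a, ((adj_rainbow hn).mpr rfl).reachable⟩, ?_, ?_⟩
  · intro h
    have := congrArg Subtype.val h
    exact Q.fixedFree a this.symm
  · apply Set.eq_univ_of_forall
    rintro ⟨b, hb⟩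
    rcases (reach_rainbow hn).mp hb with h | h
    · exact Set.mem_insert_iff.mpr (Or.inl (Subtype.ext h))
    · exact Set.mem_insert_iff.mpr (Or.inr (Set.mem_singleton_iff.mpr (Subtype.ext h)))

lemma rainbow_noncrossing (hn : 1 ≤ n) (hQ : Q.IsNoncrossing) :
    (rainbow hn Q).IsNoncrossing := by
  rintro ⟨x, y, h1, h2, h3⟩
  have hab : blk hn x ≤ blk hn y := blk_le_of_le hn (le_of_lt h1)
  have hba' : blk hn y ≤ Q.pair (blk hn x) := by
    have := blk_le_of_le hn (le_of_lt h2)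
    rwa [blk_rainbow] at this
  have ha'b' : Q.pair (blk hn x) ≤ Q.pair (blk hn y) := by
    have := blk_le_of_le hn (le_of_lt h3)
    rwa [blk_rainbow, blk_rainbow] at this
  have haa' : blk hn x < Q.pair (blk hn x) := by
    have h0 : blk hn x ≤ blk hn ((rainbow hn Q).pair x) :=
      blk_le_of_le hn (le_of_lt (lt_trans h1 h2))
    rw [blk_rainbow] at h0
    exact lt_of_le_of_ne h0 (fun he => Q.fixedFree (blk hn x) he.symm)
  rcases lt_or_eq_of_le hab with hab' | hab'
  · rcases lt_or_eq_of_le hba' with hba'' | hba''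
    · have hne : Q.pair (blk hn x) ≠ Q.pair (blk hn y) := by
        intro he
        have := congrArg Q.pair he
        rw [Q.involutive, Q.involutive] at this
        rw [this] at hab'
        exact lt_irrefl _ hab'
      exact hQ ⟨blk hn x, blk hn y, hab', hba'', lt_of_le_of_ne ha'b' hne⟩
    · have h5 : Q.pair (blk hn y) = blk hn x := by rw [hba'', Q.involutive]
      rw [h5] at ha'b'
      exact absurd haa' (not_lt.mpr ha'b')
  · -- same block
    have hmx : (x : ℕ) % n < n := Nat.mod_lt _ hn
    have hmy : (y : ℕ) % n < n := Nat.mod_lt _ hn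
    have e1 := blk_mul_add_mod hn x
    have e2 := blk_mul_add_mod hn y
    have hv : ((blk hn x : ℕ)) = ((blk hn y : ℕ)) := congrArg Fin.val hab'
    rw [← hv] at e2
    have hxy : (x : ℕ) % n < (y : ℕ) % n := by
      have h1' : (x : ℕ) < (y : ℕ) := h1
      omega
    have hp : ((rainbow hn Q).pair x : ℕ) < ((rainbow hn Q).pair y : ℕ) := h3
    rw [rainbow_pair_val, rainbow_pair_val, ← hab'] at hp
    omega

lemma three_distinct {α : Type*} (h2 : Nat.card α = 2) {x y z : α}
    (hxy : x ≠ y) (hyz : y ≠ z) (hxz : x ≠ z) : False := by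
  obtain ⟨u, v, huv, hcov⟩ := Nat.card_eq_two_iff.mp h2
  have hmem : ∀ t : α, t = u ∨ t = v := by
    intro t
    have : t ∈ ({u, v} : Set α) := by rw [hcov]; trivial
    simpa using this
  rcases hmem x with rfl | rfl <;> rcases hmem y with rfl | rfl <;>
    rcases hmem z with rfl | rfl <;> simp_all

section Forward
variable {P : Pairing (2*m*n)}

lemma links_ne (hR : Respects (fun _ : Fin (2*m) => n) P) {a b : Fin (2*m)}
    (h : Links (fun _ : Fin (2*m) => n) P a b) : a ≠ b := by
  obtain ⟨j, h1, h2⟩ := h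
  intro he
  rw [← he] at h2
  exact hR j a h1 h2

lemma links_symm {a b : Fin (2*m)} (h : Links (fun _ : Fin (2*m) => n) P a b) :
    Links (fun _ : Fin (2*m) => n) P b a := by
  obtain ⟨j, h1, h2⟩ := h
  exact ⟨P.pair j, h2, by rw [P.involutive]; exact h1⟩

lemma adj_iff_links (hR : Respects (fun _ : Fin (2*m) => n) P) {a b : Fin (2*m)} :
    (linkGraph (fun _ : Fin (2*m) => n) P).Adj a b ↔
      Links (fun _ : Fin (2*m) => n) P a b := by
  show (a ≠ b ∧ _) ↔ _
  constructor
  · rintro ⟨hne, h | h⟩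
    · exact h
    · exact links_symm h
  · intro h
    exact ⟨links_ne hR h, Or.inl h⟩

lemma links_blk (hn : 1 ≤ n) (x : Fin (2*m*n)) :
    Links (fun _ : Fin (2*m) => n) P (blk hn x) (blk hn (P.pair x)) :=
  ⟨x, inBlock_blk hn x, inBlock_blk hn (P.pair x)⟩

lemma neighbor_unique
    (hC : ∀ a : Fin (2*m), Nat.card {b : Fin (2*m) //
      (linkGraph (fun _ : Fin (2*m) => n) P).Reachable a b} = 2)
    {a b c : Fin (2*m)}
    (h1 : (linkGraph (fun _ : Fin (2*m) => n) P).Adj a b)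
    (h2 : (linkGraph (fun _ : Fin (2*m) => n) P).Adj a c) : b = c := by
  by_contra hbc
  refine three_distinct (hC a) (x := ⟨a, SimpleGraph.Reachable.refl _⟩)
    (y := ⟨b, h1.reachable⟩) (z := ⟨c, h2.reachable⟩) ?_ ?_ ?_
  · intro h; exact h1.ne (congrArg Subtype.val h)
  · intro h; exact hbc (congrArg Subtype.val h)
  · intro h; exact h2.ne (congrArg Subtype.val h)

/-- the induced pairing function on blocks. -/
def pairB (hn : 1 ≤ n) (P : Pairing (2*m*n)) : Fin (2*m) → Fin (2*m) :=
  fun a => blk hn (P.pair (firstEl hn a))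

lemma pairB_adj (hn : 1 ≤ n) (hR : Respects (fun _ : Fin (2*m) => n) P) (a : Fin (2*m)) :
    (linkGraph (fun _ : Fin (2*m) => n) P).Adj a (pairB hn P a) := by
  rw [adj_iff_links hR]
  exact ⟨firstEl hn a, inBlock_firstEl hn a, inBlock_blk hn _⟩

variable (hn : 1 ≤ n) (hR : Respects (fun _ : Fin (2*m) => n) P)
  (hNC : P.IsNoncrossing)
  (hC : ∀ a : Fin (2*m), Nat.card {b : Fin (2*m) //
    (linkGraph (fun _ : Fin (2*m) => n) P).Reachable a b} = 2)

include hn hR hC in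
lemma blk_pair_eq (x : Fin (2*m*n)) : blk hn (P.pair x) = pairB hn P (blk hn x) :=
  neighbor_unique hC ((adj_iff_links hR).mpr (links_blk hn x)) (pairB_adj hn hR _)

include hn hR hC in
lemma pairB_invol (a : Fin (2*m)) : pairB hn P (pairB hn P a) = a :=
  neighbor_unique hC (pairB_adj hn hR _) (pairB_adj hn hR a).symm

include hn hR in
lemma pairB_ne (a : Fin (2*m)) : pairB hn P a ≠ a :=
  Ne.symm (pairB_adj hn hR a).ne

/-- the induced pairing on blocks. -/
def QofP : Pairing (2*m) where
  pair := pairB hn P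
  involutive := pairB_invol hn hR hC
  fixedFree := pairB_ne hn hR

include hNC in
lemma QofP_noncrossing : (QofP hn hR hC).IsNoncrossing := by
  rintro ⟨a, b, h1, h2, h3⟩
  refine hNC ⟨firstEl hn a, firstEl hn b, ?_, ?_, ?_⟩
  · apply lt_of_blk_lt hn
    rwa [blk_firstEl, blk_firstEl]
  · apply lt_of_blk_lt hn
    rw [blk_firstEl]
    exact h2
  · apply lt_of_blk_lt hn
    exact h3

/-- the unique strictly decreasing bijection lemma. -/
lemma dec_lemma (g : ℕ → ℕ) (hg : ∀ k l, k < l → l < n → g l < g k)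
    (hb : ∀ k, k < n → g k < n) : ∀ k, k < n → g k = n - 1 - k := by
  have upper : ∀ k, k < n → g k + k ≤ n - 1 := by
    intro k
    induction k with
    | zero => intro h; have := hb 0 h; omega
    | succ k ih =>
      intro h
      have hgk := hg k (k+1) (by omega) h
      have h2 := ih (by omega)
      omega
  have lower : ∀ j k, k < n → n - 1 - k = j → n - 1 ≤ g k + k := by
    intro j
    induction j with
    | zero => intro k hk he; omega
    | succ j ih =>
      intro k hk he
      have hk1 : k + 1 < n := by omega
      have hl := ih (k+1) hk1 (by omega)
      have hgk := hg k (k+1) (by omega) hk1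
      omega
  intro k hk
  have := upper k hk
  have := lower (n - 1 - k) k hk rfl
  omega

include hR hNC hC in
lemma pair_block_val {a : Fin (2*m)} (ha : a < pairB hn P a) {k : ℕ} (hk : k < n) :
    (P.pair ⟨(a : ℕ)*n + k, bval_lt hn a hk⟩ : ℕ) = (pairB hn P a : ℕ) * n + (n - 1 - k) := by
  have hblkel : ∀ (k : ℕ) (hk : k < n),
      blk hn (⟨(a : ℕ)*n + k, bval_lt hn a hk⟩ : Fin (2*m*n)) = a :=
    fun k hk => Fin.ext (div_mk hn _ _ hk)
  have hpairblk : ∀ (k : ℕ) (hk : k < n),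
      blk hn (P.pair ⟨(a : ℕ)*n + k, bval_lt hn a hk⟩) = pairB hn P a := by
    intro k hk
    rw [blk_pair_eq hn hR hC, hblkel k hk]
  have hbound : ∀ (k : ℕ) (hk : k < n),
      (pairB hn P a : ℕ) * n ≤ (P.pair ⟨(a : ℕ)*n + k, bval_lt hn a hk⟩ : ℕ) ∧
      (P.pair ⟨(a : ℕ)*n + k, bval_lt hn a hk⟩ : ℕ) < (pairB hn P a : ℕ) * n + n := by
    intro k hk
    have := inBlock_blk hn (P.pair ⟨(a : ℕ)*n + k, bval_lt hn a hk⟩)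
    rw [hpairblk k hk] at this
    exact inBlock_iff'.mp this
  set g : ℕ → ℕ := fun k => if hk : k < n then
    (P.pair ⟨(a : ℕ)*n + k, bval_lt hn a hk⟩ : ℕ) - (pairB hn P a : ℕ) * n else 0 with hgdef
  have hgval : ∀ (k : ℕ) (hk : k < n),
      g k = (P.pair ⟨(a : ℕ)*n + k, bval_lt hn a hk⟩ : ℕ) - (pairB hn P a : ℕ) * n := by
    intro k hk
    rw [hgdef]
    simp only [dif_pos hk]
  have hg : ∀ k l, k < l → l < n → g l < g k := by
    intro k l hkl hl
    have hkn : k < n := lt_trans hkl hl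
    rw [hgval k hkn, hgval l hl]
    have hb1 := hbound k hkn
    have hb2 := hbound l hl
    have hxy : (⟨(a : ℕ)*n + k, bval_lt hn a hkn⟩ : Fin (2*m*n)) <
        ⟨(a : ℕ)*n + l, bval_lt hn a hl⟩ := by
      show (a : ℕ)*n + k < (a : ℕ)*n + l
      omega
    have hyp : (⟨(a : ℕ)*n + l, bval_lt hn a hl⟩ : Fin (2*m*n)) <
        P.pair ⟨(a : ℕ)*n + k, bval_lt hn a hkn⟩ := by
      apply lt_of_blk_lt hn
      rw [hblkel l hl, hpairblk k hkn]
      exact ha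
    have hne : P.pair ⟨(a : ℕ)*n + k, bval_lt hn a hkn⟩ ≠
        P.pair ⟨(a : ℕ)*n + l, bval_lt hn a hl⟩ := by
      intro he
      have := congrArg P.pair he
      rw [P.involutive, P.involutive] at this
      have := congrArg Fin.val this
      simp only at this
      omega
    have hnc : ¬ (P.pair ⟨(a : ℕ)*n + k, bval_lt hn a hkn⟩ <
        P.pair ⟨(a : ℕ)*n + l, bval_lt hn a hl⟩) := by
      intro hlt
      exact hNC ⟨_, _, hxy, hyp, hlt⟩
    have hfin : P.pair ⟨(a : ℕ)*n + l, bval_lt hn a hl⟩ <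
        P.pair ⟨(a : ℕ)*n + k, bval_lt hn a hkn⟩ := by
      rcases lt_trichotomy (P.pair ⟨(a : ℕ)*n + k, bval_lt hn a hkn⟩)
        (P.pair ⟨(a : ℕ)*n + l, bval_lt hn a hl⟩) with h | h | h
      · exact absurd h hnc
      · exact absurd h hne
      · exact h
    have hfin' : (P.pair ⟨(a : ℕ)*n + l, bval_lt hn a hl⟩ : ℕ) <
        (P.pair ⟨(a : ℕ)*n + k, bval_lt hn a hkn⟩ : ℕ) := hfin
    omega
  have hbg : ∀ k, k < n → g k < n := by
    intro k hk
    rw [hgval k hk]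
    have := hbound k hk
    omega
  have := dec_lemma (n := n) g hg hbg k hk
  rw [hgval k hk] at this
  have hb1 := hbound k hk
  omega

include hR hNC hC in
lemma rainbow_QofP : rainbow hn (QofP hn hR hC) = P := by
  apply pairing_ext
  intro x
  apply Fin.ext
  have hmod : (x : ℕ) % n < n := Nat.mod_lt _ hn
  have hxval : ((blk hn x : ℕ)) * n + (x : ℕ) % n = (x : ℕ) := blk_mul_add_mod hn x
  have hxeq : x = ⟨(blk hn x : ℕ) * n + (x : ℕ) % n, bval_lt hn _ hmod⟩ :=
    Fin.ext hxval.symm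
  have hrv : ((rainbow hn (QofP hn hR hC)).pair x : ℕ) =
      (pairB hn P (blk hn x) : ℕ) * n + (n - 1 - (x : ℕ) % n) := rfl
  rw [hrv]
  rcases lt_trichotomy (blk hn x) (pairB hn P (blk hn x)) with hlt | heq | hgt
  · conv_rhs => rw [hxeq]
    exact (pair_block_val hn hR hNC hC hlt hmod).symm
  · exact absurd heq.symm (pairB_ne hn hR _)
  · set a := blk hn x with hadef
    set b := pairB hn P a with hbdef
    have hba : b < pairB hn P b := by
      rw [hbdef, pairB_invol hn hR hC]
      exact hgt
    have hcx : n - 1 - (x : ℕ) % n < n := by omega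
    have key := pair_block_val hn hR hNC hC (a := b) hba hcx
    rw [pairB_invol hn hR hC] at key
    have hxkey : P.pair ⟨(b : ℕ)*n + (n - 1 - (x : ℕ) % n), bval_lt hn b hcx⟩ = x := by
      apply Fin.ext
      rw [key]
      omega
    have := congrArg P.pair hxkey
    rw [P.involutive] at this
    rw [← this]
  
end Forward

/-- the main equivalence. -/
noncomputable def mainEquiv (hn : 1 ≤ n) :
    {P : Pairing (2*m*n) // Respects (fun _ : Fin (2*m) => n) P ∧ P.IsNoncrossing ∧
      ∀ a : Fin (2*m), Nat.card {b : Fin (2*m) //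
        (linkGraph (fun _ : Fin (2*m) => n) P).Reachable a b} = 2} ≃
    {Q : Pairing (2*m) // Q.IsNoncrossing} where
  toFun P := ⟨QofP hn P.2.1 P.2.2.2, QofP_noncrossing hn P.2.1 P.2.2.1 P.2.2.2⟩
  invFun Q := ⟨rainbow hn Q.1, rainbow_respects hn Q.1, rainbow_noncrossing hn Q.2,
    fun a => comp_card_rainbow hn a⟩
  left_inv P := Subtype.ext (rainbow_QofP hn P.2.1 P.2.2.1 P.2.2.2)
  right_inv Q := Subtype.ext (pairing_ext (fun a => by
    show pairB hn (rainbow hn Q.1) a = Q.1.pair a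
    unfold pairB
    rw [blk_rainbow, blk_firstEl]))

end Blocks
end NCP

theorem stmt10 (n m : ℕ) (hn : 1 ≤ n) (hm : 1 ≤ m) :
    Nat.card {P : Pairing (2 * m * n) //
        Respects (fun _ : Fin (2 * m) => n) P ∧ P.IsNoncrossing ∧
        ∀ a : Fin (2 * m),
          Nat.card {b : Fin (2 * m) //
            (linkGraph (fun _ : Fin (2 * m) => n) P).Reachable a b} = 2} =
      catalan m := by
  rw [Nat.card_congr (NCP.mainEquiv hn), NCP.card_ncp m]
end

section
/- Let f ∈ L²(ℝ₊²) be mirror symmetric and let f̄ denote the pointwise complex conjugate of f. Then ‖f ⌢₁ f̄‖_{L²(ℝ₊²)} = ‖f̄ ⌢₁ f‖_{L²(ℝ₊²)} ≤ ‖f ⌢₁ f‖_{L²(ℝ₊²)}. -/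
open MeasureTheory

/-- Lebesgue measure on `ℝ₊²`. -/
noncomputable def m2 : Measure (ℝ × ℝ) := mplus.prod mplus

/-- The first contraction `(f ⌢₁ g)(t₁,t₂) = ∫₀^∞ f(t₁,s) g(s,t₂) ds`. -/
noncomputable def contr1 (f g : ℝ × ℝ → ℂ) : ℝ × ℝ → ℂ :=
  fun t => ∫ s, f (t.1, s) * g (s, t.2) ∂mplus

open MeasureTheory.Measure Complex
open scoped ENNReal

instance : SigmaFinite mplus := by unfold mplus; infer_instance
instance : SigmaFinite m2 := by unfold m2; infer_instance

lemma m2_def : m2 = mplus.prod mplus := rfl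

lemma swap_mp : MeasurePreserving Prod.swap m2 m2 := by
  rw [m2_def]; exact measurePreserving_swap

/-- `∫⁻ ‖f‖²` over `m2`. -/
noncomputable def J (f : ℝ × ℝ → ℂ) : ℝ≥0∞ := ∫⁻ q, (‖f q‖₊ : ℝ≥0∞) ^ (2:ℝ) ∂m2

/-- squared L² norm of the section `f (t, ·)`. -/
noncomputable def R2 (f : ℝ × ℝ → ℂ) (t : ℝ) : ℝ≥0∞ :=
  ∫⁻ s, (‖f (t, s)‖₊ : ℝ≥0∞) ^ (2:ℝ) ∂mplus

lemma measurable_R2 {f : ℝ × ℝ → ℂ} (hf : StronglyMeasurable f) : Measurable (R2 f) := by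
  unfold R2
  exact Measurable.lintegral_prod_right' (hf.measurable.enorm.pow_const _)

lemma lintegral_R2 {f : ℝ × ℝ → ℂ} (hf : StronglyMeasurable f) :
    ∫⁻ t, R2 f t ∂mplus = J f := by
  rw [J, m2_def, lintegral_prod]
  · rfl
  · exact (hf.measurable.enorm.pow_const _).aemeasurable

lemma J_lt_top {f : ℝ × ℝ → ℂ} (hf : MemLp f 2 m2) : J f < ⊤ := by
  have h := hf.2
  rw [eLpNorm_eq_lintegral_rpow_enorm_toReal two_ne_zero ENNReal.ofNat_ne_top] at h
  have h2 : (2:ℝ≥0∞).toReal = (2:ℝ) := by simp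
  rw [h2] at h
  have : J f = ((∫⁻ q, (‖f q‖₊ : ℝ≥0∞) ^ (2:ℝ) ∂m2) ^ (1/(2:ℝ))) ^ (2:ℝ) := by
    rw [← ENNReal.rpow_mul]; norm_num [J]
  rw [this]
  exact ENNReal.rpow_lt_top_of_nonneg (by norm_num) h.ne

lemma J_swap {f : ℝ × ℝ → ℂ} (hf : StronglyMeasurable f) :
    J (f ∘ Prod.swap) = J f := by
  rw [J, J]
  exact swap_mp.lintegral_comp (hf.measurable.enorm.pow_const _) |>.trans rfl

lemma conj_exp_two : Real.HolderConjugate 2 2 := Real.HolderConjugate.two_two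

/-- pointwise Cauchy–Schwarz bound for bilinear integrals, in `ℝ≥0∞`. -/
lemma nnnorm_bil_le {f g : ℝ × ℝ → ℂ} (hf : StronglyMeasurable f) (hg : StronglyMeasurable g)
    (q : ℝ × ℝ) :
    (‖∫ s, f (q.1, s) * g (q.2, s) ∂mplus‖₊ : ℝ≥0∞) ≤
      (R2 f q.1) ^ (1/2:ℝ) * (R2 g q.2) ^ (1/2:ℝ) := by
  calc (‖∫ s, f (q.1, s) * g (q.2, s) ∂mplus‖₊ : ℝ≥0∞)
      ≤ ∫⁻ s, ‖f (q.1, s) * g (q.2, s)‖₊ ∂mplus := enorm_integral_le_lintegral_enorm _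
    _ = ∫⁻ s, (fun s => (‖f (q.1, s)‖₊ : ℝ≥0∞)) s * (fun s => (‖g (q.2, s)‖₊ : ℝ≥0∞)) s ∂mplus := by
        simp [nnnorm_mul, ENNReal.coe_mul]
    _ ≤ (∫⁻ s, (‖f (q.1, s)‖₊ : ℝ≥0∞) ^ (2:ℝ) ∂mplus) ^ (1/(2:ℝ)) *
        (∫⁻ s, (‖g (q.2, s)‖₊ : ℝ≥0∞) ^ (2:ℝ) ∂mplus) ^ (1/(2:ℝ)) := by
        exact ENNReal.lintegral_mul_le_Lp_mul_Lq mplus conj_exp_two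
          (hf.measurable.enorm.comp (measurable_prodMk_left)).aemeasurable
          (hg.measurable.enorm.comp (measurable_prodMk_left)).aemeasurable
    _ = (R2 f q.1) ^ (1/2:ℝ) * (R2 g q.2) ^ (1/2:ℝ) := rfl

lemma sm_bil {f g : ℝ × ℝ → ℂ} (hf : StronglyMeasurable f) (hg : StronglyMeasurable g) :
    StronglyMeasurable (fun q : ℝ × ℝ => ∫ s, f (q.1, s) * g (q.2, s) ∂mplus) := by
  apply StronglyMeasurable.integral_prod_right'
    (f := fun z : (ℝ × ℝ) × ℝ => f (z.1.1, z.2) * g (z.1.2, z.2))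
  apply StronglyMeasurable.mul
  · exact hf.comp_measurable ((measurable_fst.comp measurable_fst).prodMk measurable_snd)
  · exact hg.comp_measurable ((measurable_snd.comp measurable_fst).prodMk measurable_snd)

lemma memLp_bil {f g : ℝ × ℝ → ℂ} (hf : StronglyMeasurable f) (hg : StronglyMeasurable g)
    (hf2 : J f < ⊤) (hg2 : J g < ⊤) :
    MemLp (fun q : ℝ × ℝ => ∫ s, f (q.1, s) * g (q.2, s) ∂mplus) 2 m2 := by
  refine ⟨(sm_bil hf hg).aestronglyMeasurable, ?_⟩
  rw [eLpNorm_eq_lintegral_rpow_enorm_toReal two_ne_zero ENNReal.ofNat_ne_top]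
  have h2 : (2:ℝ≥0∞).toReal = (2:ℝ) := by simp
  rw [h2]
  have key : ∫⁻ q, (‖∫ s, f (q.1, s) * g (q.2, s) ∂mplus‖₊ : ℝ≥0∞) ^ (2:ℝ) ∂m2 ≤ J f * J g := by
    calc ∫⁻ q, (‖∫ s, f (q.1, s) * g (q.2, s) ∂mplus‖₊ : ℝ≥0∞) ^ (2:ℝ) ∂m2
        ≤ ∫⁻ q, (fun t => R2 f t) q.1 * (fun t => R2 g t) q.2 ∂m2 := by
          apply lintegral_mono
          intro q
          calc (‖∫ s, f (q.1, s) * g (q.2, s) ∂mplus‖₊ : ℝ≥0∞) ^ (2:ℝ)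
              ≤ ((R2 f q.1) ^ (1/2:ℝ) * (R2 g q.2) ^ (1/2:ℝ)) ^ (2:ℝ) :=
                ENNReal.rpow_le_rpow (nnnorm_bil_le hf hg q) (by norm_num)
            _ = R2 f q.1 * R2 g q.2 := by
                rw [ENNReal.mul_rpow_of_nonneg _ _ (by norm_num : (0:ℝ) ≤ 2),
                  ← ENNReal.rpow_mul, ← ENNReal.rpow_mul]
                norm_num
      _ = (∫⁻ t, R2 f t ∂mplus) * (∫⁻ t, R2 g t ∂mplus) := by
          rw [m2_def]
          exact lintegral_prod_mul (measurable_R2 hf).aemeasurable (measurable_R2 hg).aemeasurable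
      _ = J f * J g := by rw [lintegral_R2 hf, lintegral_R2 hg]
  have : (∫⁻ q, (‖∫ s, f (q.1, s) * g (q.2, s) ∂mplus‖₊ : ℝ≥0∞) ^ (2:ℝ) ∂m2) < ⊤ :=
    lt_of_le_of_lt key (ENNReal.mul_lt_top hf2 hg2)
  exact ENNReal.rpow_lt_top_of_nonneg (by norm_num) this.ne

lemma rpow_half_sq (a : ℝ≥0∞) : a ^ (1/2:ℝ) * a ^ (1/2:ℝ) = a := by
  rw [← ENNReal.rpow_add_of_nonneg _ _ (by norm_num) (by norm_num)]
  norm_num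

/-- the common `ℝ≥0∞`-norm bound for the 4-fold product integrands. -/
lemma hfi_Phi {f : ℝ × ℝ → ℂ} (hf : StronglyMeasurable f) (h2 : J f < ⊤) :
    ∫⁻ z, ((‖f (z.1.1, z.2.1)‖₊ : ℝ≥0∞) * ‖f (z.1.1, z.2.2)‖₊) *
        ((‖f (z.1.2, z.2.1)‖₊ : ℝ≥0∞) * ‖f (z.1.2, z.2.2)‖₊) ∂(m2.prod m2) < ⊤ := by
  have hfm := hf.measurable
  have hfswap : StronglyMeasurable (f ∘ Prod.swap) := hf.comp_measurable measurable_swap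
  have hmS : Measurable (R2 (f ∘ Prod.swap)) := measurable_R2 hfswap
  calc ∫⁻ z, ((‖f (z.1.1, z.2.1)‖₊ : ℝ≥0∞) * ‖f (z.1.1, z.2.2)‖₊) *
        ((‖f (z.1.2, z.2.1)‖₊ : ℝ≥0∞) * ‖f (z.1.2, z.2.2)‖₊) ∂(m2.prod m2)
      = ∫⁻ p, ∫⁻ q, ((‖f (q.1, p.1)‖₊ : ℝ≥0∞) * ‖f (q.1, p.2)‖₊) *
          ((‖f (q.2, p.1)‖₊ : ℝ≥0∞) * ‖f (q.2, p.2)‖₊) ∂m2 ∂m2 := by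
        exact lintegral_prod_symm _ (by fun_prop)
    _ ≤ ∫⁻ p, R2 (f ∘ Prod.swap) p.1 * R2 (f ∘ Prod.swap) p.2 ∂m2 := by
        apply lintegral_mono
        intro p
        dsimp only
        have hinner : ∫⁻ q, ((‖f (q.1, p.1)‖₊ : ℝ≥0∞) * ‖f (q.1, p.2)‖₊) *
            ((‖f (q.2, p.1)‖₊ : ℝ≥0∞) * ‖f (q.2, p.2)‖₊) ∂m2 =
            (∫⁻ t, (‖f (t, p.1)‖₊ : ℝ≥0∞) * ‖f (t, p.2)‖₊ ∂mplus) *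
            (∫⁻ t, (‖f (t, p.1)‖₊ : ℝ≥0∞) * ‖f (t, p.2)‖₊ ∂mplus) := by
          rw [m2_def]
          exact lintegral_prod_mul (f := fun t => (‖f (t, p.1)‖₊ : ℝ≥0∞) * ‖f (t, p.2)‖₊)
            (g := fun t => (‖f (t, p.1)‖₊ : ℝ≥0∞) * ‖f (t, p.2)‖₊) (by fun_prop) (by fun_prop)
        have hCS : ∫⁻ t, (‖f (t, p.1)‖₊ : ℝ≥0∞) * ‖f (t, p.2)‖₊ ∂mplus ≤
            (R2 (f ∘ Prod.swap) p.1) ^ (1/2:ℝ) * (R2 (f ∘ Prod.swap) p.2) ^ (1/2:ℝ) := by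
          have h := ENNReal.lintegral_mul_le_Lp_mul_Lq mplus conj_exp_two
            (f := fun t => (‖f (t, p.1)‖₊ : ℝ≥0∞)) (g := fun t => (‖f (t, p.2)‖₊ : ℝ≥0∞))
            (by fun_prop) (by fun_prop)
          simpa [R2] using h
        rw [hinner]
        calc (∫⁻ t, (‖f (t, p.1)‖₊ : ℝ≥0∞) * ‖f (t, p.2)‖₊ ∂mplus) *
              (∫⁻ t, (‖f (t, p.1)‖₊ : ℝ≥0∞) * ‖f (t, p.2)‖₊ ∂mplus)
            ≤ ((R2 (f ∘ Prod.swap) p.1) ^ (1/2:ℝ) * (R2 (f ∘ Prod.swap) p.2) ^ (1/2:ℝ)) *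
              ((R2 (f ∘ Prod.swap) p.1) ^ (1/2:ℝ) * (R2 (f ∘ Prod.swap) p.2) ^ (1/2:ℝ)) :=
              mul_le_mul' hCS hCS
          _ = (R2 (f ∘ Prod.swap) p.1 ^ (1/2:ℝ) * R2 (f ∘ Prod.swap) p.1 ^ (1/2:ℝ)) *
              (R2 (f ∘ Prod.swap) p.2 ^ (1/2:ℝ) * R2 (f ∘ Prod.swap) p.2 ^ (1/2:ℝ)) := by ring
          _ = R2 (f ∘ Prod.swap) p.1 * R2 (f ∘ Prod.swap) p.2 := by
              rw [rpow_half_sq, rpow_half_sq]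
    _ = (∫⁻ t, R2 (f ∘ Prod.swap) t ∂mplus) * (∫⁻ t, R2 (f ∘ Prod.swap) t ∂mplus) := by
        rw [m2_def]
        exact lintegral_prod_mul hmS.aemeasurable hmS.aemeasurable
    _ < ⊤ := by
        rw [lintegral_R2 hfswap, J_swap hf]
        exact ENNReal.mul_lt_top h2 h2

open ComplexConjugate

@[fun_prop]
lemma measurable_conj_c : Measurable fun z : ℂ => (starRingEnd ℂ) z := Complex.continuous_conj.measurable

lemma int_Phi {f : ℝ × ℝ → ℂ} (hf : StronglyMeasurable f) (h2 : J f < ⊤) :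
    Integrable (fun z : (ℝ × ℝ) × (ℝ × ℝ) =>
      (f (z.1.1, z.2.1) * conj (f (z.1.1, z.2.2))) *
        (f (z.1.2, z.2.1) * conj (f (z.1.2, z.2.2)))) (m2.prod m2) := by
  have hfm := hf.measurable
  refine ⟨(Measurable.aestronglyMeasurable (by fun_prop)), ?_⟩
  rw [hasFiniteIntegral_def]
  calc ∫⁻ z, ↑‖(f (z.1.1, z.2.1) * conj (f (z.1.1, z.2.2))) *
        (f (z.1.2, z.2.1) * conj (f (z.1.2, z.2.2)))‖₊ ∂(m2.prod m2)
      = ∫⁻ z, ((‖f (z.1.1, z.2.1)‖₊ : ℝ≥0∞) * ‖f (z.1.1, z.2.2)‖₊) *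
          ((‖f (z.1.2, z.2.1)‖₊ : ℝ≥0∞) * ‖f (z.1.2, z.2.2)‖₊) ∂(m2.prod m2) := by
        congr 1; funext z; simp [nnnorm_mul]
    _ < ⊤ := hfi_Phi hf h2

lemma int_Phi' {f : ℝ × ℝ → ℂ} (hf : StronglyMeasurable f) (h2 : J f < ⊤) :
    Integrable (fun z : (ℝ × ℝ) × (ℝ × ℝ) =>
      (f (z.1.1, z.2.1) * conj (f (z.1.1, z.2.2))) *
        conj (f (z.1.2, z.2.1) * conj (f (z.1.2, z.2.2)))) (m2.prod m2) := by
  have hfm := hf.measurable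
  refine ⟨(Measurable.aestronglyMeasurable (by fun_prop)), ?_⟩
  rw [hasFiniteIntegral_def]
  calc ∫⁻ z, ↑‖(f (z.1.1, z.2.1) * conj (f (z.1.1, z.2.2))) *
        conj (f (z.1.2, z.2.1) * conj (f (z.1.2, z.2.2)))‖₊ ∂(m2.prod m2)
      = ∫⁻ z, ((‖f (z.1.1, z.2.1)‖₊ : ℝ≥0∞) * ‖f (z.1.1, z.2.2)‖₊) *
          ((‖f (z.1.2, z.2.1)‖₊ : ℝ≥0∞) * ‖f (z.1.2, z.2.2)‖₊) ∂(m2.prod m2) := by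
        congr 1; funext z; simp [nnnorm_mul]
    _ < ⊤ := hfi_Phi hf h2

noncomputable def GG (f : ℝ × ℝ → ℂ) : ℝ × ℝ → ℂ :=
  fun q => ∫ s, f (q.1, s) * f (q.2, s) ∂mplus
noncomputable def HH (f : ℝ × ℝ → ℂ) : ℝ × ℝ → ℂ :=
  fun q => ∫ s, f (q.1, s) * conj (f (q.2, s)) ∂mplus
noncomputable def KK (f : ℝ × ℝ → ℂ) : ℝ × ℝ → ℂ :=
  fun p => ∫ t, f (t, p.1) * conj (f (t, p.2)) ∂mplus

lemma key1 {f : ℝ × ℝ → ℂ} (hsm : StronglyMeasurable f) (hf : MemLp f 2 m2) :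
    ∫ q, ((normSq (GG f q) : ℝ) : ℂ) ∂m2 = ∫ p, KK f p * KK f p ∂m2 := by
  have h2 : J f < ⊤ := J_lt_top hf
  calc ∫ q, ((normSq (GG f q) : ℝ) : ℂ) ∂m2
      = ∫ q, ∫ p, (f (q.1, p.1) * conj (f (q.1, p.2))) *
          (f (q.2, p.1) * conj (f (q.2, p.2))) ∂m2 ∂m2 := by
        apply integral_congr_ae (Filter.Eventually.of_forall fun q => ?_)
        calc ((normSq (GG f q) : ℝ) : ℂ) = GG f q * conj (GG f q) := (Complex.mul_conj _).symm
          _ = (∫ s, f (q.1, s) * f (q.2, s) ∂mplus) *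
              (∫ u, conj (f (q.1, u) * f (q.2, u)) ∂mplus) := by
              rw [integral_conj]; rfl
          _ = ∫ p, (fun s => f (q.1, s) * f (q.2, s)) p.1 *
              (fun u => conj (f (q.1, u) * f (q.2, u))) p.2 ∂(mplus.prod mplus) :=
              (integral_prod_mul _ _).symm
          _ = ∫ p, (f (q.1, p.1) * conj (f (q.1, p.2))) *
              (f (q.2, p.1) * conj (f (q.2, p.2))) ∂m2 := by
              rw [← m2_def]
              apply integral_congr_ae (Filter.Eventually.of_forall fun p => ?_)
              simp only [map_mul]
              ring
    _ = ∫ p, ∫ q, (f (q.1, p.1) * conj (f (q.1, p.2))) *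
          (f (q.2, p.1) * conj (f (q.2, p.2))) ∂m2 ∂m2 :=
        integral_integral_swap (int_Phi hsm h2)
    _ = ∫ p, KK f p * KK f p ∂m2 := by
        apply integral_congr_ae (Filter.Eventually.of_forall fun p => ?_)
        rw [m2_def]
        exact integral_prod_mul (fun t => f (t, p.1) * conj (f (t, p.2)))
          (fun t => f (t, p.1) * conj (f (t, p.2)))

lemma key2 {f : ℝ × ℝ → ℂ} (hsm : StronglyMeasurable f) (hf : MemLp f 2 m2) :
    ∫ q, ((normSq (HH f q) : ℝ) : ℂ) ∂m2 = ∫ p, KK f p * conj (KK f p) ∂m2 := by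
  have h2 : J f < ⊤ := J_lt_top hf
  calc ∫ q, ((normSq (HH f q) : ℝ) : ℂ) ∂m2
      = ∫ q, ∫ p, (f (q.1, p.1) * conj (f (q.1, p.2))) *
          conj (f (q.2, p.1) * conj (f (q.2, p.2))) ∂m2 ∂m2 := by
        apply integral_congr_ae (Filter.Eventually.of_forall fun q => ?_)
        calc ((normSq (HH f q) : ℝ) : ℂ) = HH f q * conj (HH f q) := (Complex.mul_conj _).symm
          _ = (∫ s, f (q.1, s) * conj (f (q.2, s)) ∂mplus) *
              (∫ u, conj (f (q.1, u) * conj (f (q.2, u))) ∂mplus) := by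
              rw [integral_conj]; rfl
          _ = ∫ p, (fun s => f (q.1, s) * conj (f (q.2, s))) p.1 *
              (fun u => conj (f (q.1, u) * conj (f (q.2, u)))) p.2 ∂(mplus.prod mplus) :=
              (integral_prod_mul _ _).symm
          _ = ∫ p, (f (q.1, p.1) * conj (f (q.1, p.2))) *
              conj (f (q.2, p.1) * conj (f (q.2, p.2))) ∂m2 := by
              rw [← m2_def]
              apply integral_congr_ae (Filter.Eventually.of_forall fun p => ?_)
              simp only [map_mul, Complex.conj_conj]
              ring
    _ = ∫ p, ∫ q, (f (q.1, p.1) * conj (f (q.1, p.2))) *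
          conj (f (q.2, p.1) * conj (f (q.2, p.2))) ∂m2 ∂m2 :=
        integral_integral_swap (int_Phi' hsm h2)
    _ = ∫ p, KK f p * conj (KK f p) ∂m2 := by
        apply integral_congr_ae (Filter.Eventually.of_forall fun p => ?_)
        rw [m2_def, integral_prod_mul (fun t => f (t, p.1) * conj (f (t, p.2)))
          (fun t => conj (f (t, p.1) * conj (f (t, p.2))))]
        rw [integral_conj]
        rfl

lemma norm_rpow_two_normSq (z : ℂ) : ‖z‖ ^ (2:ℝ) = normSq z := by
  rw [show (2:ℝ) = ((2:ℕ):ℝ) by norm_num, Real.rpow_natCast,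
    Complex.sq_norm]

lemma core {f : ℝ × ℝ → ℂ} (hsm : StronglyMeasurable f) (hf : MemLp f 2 m2) :
    eLpNorm (GG f) 2 m2 ≤ eLpNorm (HH f) 2 m2 := by
  have h2 : J f < ⊤ := J_lt_top hf
  have hcm : StronglyMeasurable (fun x : ℝ × ℝ => conj (f x)) :=
    (measurable_conj_c.comp hsm.measurable).stronglyMeasurable
  have hJc : J (fun x : ℝ × ℝ => conj (f x)) < ⊤ := by
    have : J (fun x : ℝ × ℝ => conj (f x)) = J f := by
      unfold J; simp [RCLike.nnnorm_conj]
    rwa [this]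
  have hG : MemLp (GG f) 2 m2 := memLp_bil hsm hsm h2 h2
  have hH : MemLp (HH f) 2 m2 := memLp_bil hsm hcm h2 hJc
  -- real reformulation
  have hreal1 : ((∫ q, normSq (GG f q) ∂m2 : ℝ) : ℂ) = ∫ p, KK f p * KK f p ∂m2 :=
    integral_ofReal.symm.trans (key1 hsm hf)
  have hreal2 : ((∫ q, normSq (HH f q) ∂m2 : ℝ) : ℂ) =
      ((∫ p, normSq (KK f p) ∂m2 : ℝ) : ℂ) :=
    integral_ofReal.symm.trans ((key2 hsm hf).trans
      ((integral_congr_ae (Filter.Eventually.of_forall fun p =>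
        (Complex.mul_conj (KK f p)))).trans integral_ofReal))
  have hIH : ∫ q, normSq (HH f q) ∂m2 = ∫ p, normSq (KK f p) ∂m2 :=
    Complex.ofReal_injective hreal2
  have hle : ∫ q, normSq (GG f q) ∂m2 ≤ ∫ q, normSq (HH f q) ∂m2 := by
    have h1 : (∫ q, normSq (GG f q) ∂m2) = (∫ p, KK f p * KK f p ∂m2).re := by
      rw [← hreal1, Complex.ofReal_re]
    rw [h1, hIH]
    calc (∫ p, KK f p * KK f p ∂m2).re
        ≤ ‖∫ p, KK f p * KK f p ∂m2‖ := Complex.re_le_norm _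
      _ ≤ ∫ p, ‖KK f p * KK f p‖ ∂m2 := norm_integral_le_integral_norm _
      _ = ∫ p, normSq (KK f p) ∂m2 := by
          apply integral_congr_ae (Filter.Eventually.of_forall fun p => ?_)
          rw [norm_mul, ← norm_rpow_two_normSq]
          rw [show (2:ℝ) = ((2:ℕ):ℝ) by norm_num, Real.rpow_natCast, sq]
  rw [hG.eLpNorm_eq_integral_rpow_norm two_ne_zero ENNReal.ofNat_ne_top,
    hH.eLpNorm_eq_integral_rpow_norm two_ne_zero ENNReal.ofNat_ne_top]
  apply ENNReal.ofReal_le_ofReal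
  apply Real.rpow_le_rpow
  · exact integral_nonneg fun a => Real.rpow_nonneg (norm_nonneg _) _
  · have hexp : (2:ℝ≥0∞).toReal = (2:ℝ) := by simp
    simp_rw [hexp, norm_rpow_two_normSq]
    exact hle
  · simp

lemma contr1_congr {f g f' g' : ℝ × ℝ → ℂ} (h1 : f =ᵐ[m2] f') (h2 : g =ᵐ[m2] g') :
    contr1 f g =ᵐ[m2] contr1 f' g' := by
  have h1' : f =ᵐ[mplus.prod mplus] f' := by rwa [m2_def] at h1
  have H1 : ∀ᵐ t₁ ∂mplus, ∀ᵐ s ∂mplus, f (t₁, s) = f' (t₁, s) := ae_ae_of_ae_prod h1'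
  have h2s : ∀ᵐ z ∂(mplus.prod mplus), g (z.2, z.1) = g' (z.2, z.1) := by
    have := swap_mp.quasiMeasurePreserving.ae h2
    rwa [m2_def] at this
  have H2 : ∀ᵐ t₂ ∂mplus, ∀ᵐ s ∂mplus, g (s, t₂) = g' (s, t₂) := ae_ae_of_ae_prod h2s
  have L1 : ∀ᵐ q ∂m2, ∀ᵐ s ∂mplus, f (q.1, s) = f' (q.1, s) :=
    Measure.quasiMeasurePreserving_fst.ae H1
  have L2 : ∀ᵐ q ∂m2, ∀ᵐ s ∂mplus, g (s, q.2) = g' (s, q.2) :=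
    Measure.quasiMeasurePreserving_snd.ae H2
  filter_upwards [L1, L2] with q hq1 hq2
  show (∫ s, f (q.1, s) * g (s, q.2) ∂mplus) = ∫ s, f' (q.1, s) * g' (s, q.2) ∂mplus
  apply integral_congr_ae
  filter_upwards [hq1, hq2] with s hs1 hs2
  rw [hs1, hs2]

theorem stmt19 (f : ℝ × ℝ → ℂ) (hf : MemLp f 2 m2)
    (hmirror : f =ᵐ[m2] fun t => starRingEnd ℂ (f (t.2, t.1))) :
    eLpNorm (contr1 f (fun t => starRingEnd ℂ (f t))) 2 m2 =
      eLpNorm (contr1 (fun t => starRingEnd ℂ (f t)) f) 2 m2 ∧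
    eLpNorm (contr1 f (fun t => starRingEnd ℂ (f t))) 2 m2 ≤ eLpNorm (contr1 f f) 2 m2 := by
  have hae := hf.aestronglyMeasurable
  set f' := hae.mk f with hf'def
  have hsm : StronglyMeasurable f' := hae.stronglyMeasurable_mk
  have hff' : f =ᵐ[m2] f' := hae.ae_eq_mk
  have hf2' : MemLp f' 2 m2 := hf.ae_eq hff'
  have hcff' : (fun t => conj (f t)) =ᵐ[m2] (fun t => conj (f' t)) :=
    hff'.mono fun x hx => by simp only [hx]
  have hswap_ff' : ∀ᵐ z ∂m2, f (z.2, z.1) = f' (z.2, z.1) :=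
    swap_mp.quasiMeasurePreserving.ae hff'
  have hmir' : ∀ᵐ z ∂m2, f' z = conj (f' (z.2, z.1)) := by
    filter_upwards [hff', hmirror, hswap_ff'] with z h1 h2 h3
    rw [← h1, h2, h3]
  have hsw' : ∀ᵐ z ∂m2, f' (z.2, z.1) = conj (f' (z.1, z.2)) :=
    swap_mp.quasiMeasurePreserving.ae hmir'
  have hsw'' : ∀ᵐ z ∂(mplus.prod mplus), f' (z.2, z.1) = conj (f' (z.1, z.2)) := by
    rwa [m2_def] at hsw'
  have hae1 : ∀ᵐ t₂ ∂mplus, ∀ᵐ s ∂mplus, f' (s, t₂) = conj (f' (t₂, s)) :=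
    ae_ae_of_ae_prod hsw''
  have L : ∀ᵐ q ∂m2, ∀ᵐ s ∂mplus, f' (s, q.2) = conj (f' (q.2, s)) :=
    Measure.quasiMeasurePreserving_snd.ae hae1
  have E1 : contr1 f' (fun t => conj (f' t)) =ᵐ[m2] GG f' := by
    filter_upwards [L] with q hq
    show (∫ s, f' (q.1, s) * conj (f' (s, q.2)) ∂mplus) =
      ∫ s, f' (q.1, s) * f' (q.2, s) ∂mplus
    apply integral_congr_ae
    filter_upwards [hq] with s hs
    rw [hs, Complex.conj_conj]
  have E2 : contr1 f' f' =ᵐ[m2] HH f' := by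
    filter_upwards [L] with q hq
    show (∫ s, f' (q.1, s) * f' (s, q.2) ∂mplus) =
      ∫ s, f' (q.1, s) * conj (f' (q.2, s)) ∂mplus
    apply integral_congr_ae
    filter_upwards [hq] with s hs
    rw [hs]
  have E3 : contr1 (fun t => conj (f' t)) f' =ᵐ[m2] fun q => conj (GG f' q) := by
    filter_upwards [L] with q hq
    show (∫ s, conj (f' (q.1, s)) * f' (s, q.2) ∂mplus) =
      conj (∫ s, f' (q.1, s) * f' (q.2, s) ∂mplus)
    rw [← integral_conj]
    apply integral_congr_ae
    filter_upwards [hq] with s hs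
    rw [hs, map_mul]
  have hA : eLpNorm (contr1 f (fun t => starRingEnd ℂ (f t))) 2 m2 = eLpNorm (GG f') 2 m2 := by
    rw [eLpNorm_congr_ae (contr1_congr hff' hcff'), eLpNorm_congr_ae E1]
  have hB : eLpNorm (contr1 (fun t => starRingEnd ℂ (f t)) f) 2 m2 = eLpNorm (GG f') 2 m2 := by
    rw [eLpNorm_congr_ae (contr1_congr hcff' hff'), eLpNorm_congr_ae E3]
    exact eLpNorm_congr_norm_ae (Filter.Eventually.of_forall fun q => by
      simp [RCLike.norm_conj])
  have hC : eLpNorm (contr1 f f) 2 m2 = eLpNorm (HH f') 2 m2 := by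
    rw [eLpNorm_congr_ae (contr1_congr hff' hff'), eLpNorm_congr_ae E2]
  refine ⟨by rw [hA, hB], ?_⟩
  rw [hA, hC]
  exact core hsm hf2'
end
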